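/- arXiv:1504.07319 — 4 statements merged into one kernel-verified Lean document; each statement's English description precedes it below -/
import Mathlib

section
/- Let F be a field, let N ⊴ G be groups, and let W be an irreducible FN-module with inertia group T = I_G(W). Then the maps S ↦ ind_T^G S and V ↦ (W-homogeneous component of V) yield mutually inverse bijections between the isomorphism classes of irreducible FT-modules lying over W and the isomorphism classes of irreducible FG-modules lying over W. -/
open scoped TensorProduct DirectSum

section Preliminaries

variable (F : Type*) [Field F]

/-- Isomorphism (equivalence) of representations: an `F`-linear equivalence intertwining
the two actions. -/
def RepIso {G : Type*} [Monoid G] {V V' : Type*} [AddCommMonoid V] [Module F V]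
    [AddCommMonoid V'] [Module F V'] (ρ : Representation F G V) (τ : Representation F G V') :
    Prop :=
  ∃ e : V ≃ₗ[F] V', ∀ (g : G) (v : V), e (ρ g v) = τ g (e v)

/-- Irreducibility of a representation: the space is nonzero and admits no invariant
subspaces other than `⊥` and `⊤`. -/
def IsIrreducibleRep {G : Type*} [Monoid G] {V : Type*} [AddCommMonoid V] [Module F V]
    (ρ : Representation F G V) : Prop :=
  Nontrivial V ∧ ∀ p : Submodule F V, (∀ g : G, ∀ v ∈ p, ρ g v ∈ p) → p = ⊥ ∨ p = ⊤

/-- The subrepresentation on an invariant submodule. -/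
def subRep {G : Type*} [Monoid G] {V : Type*} [AddCommMonoid V] [Module F V]
    (ρ : Representation F G V) (p : Submodule F V) (hp : ∀ g : G, ∀ v ∈ p, ρ g v ∈ p) :
    Representation F G ↥p where
  toFun g := (ρ g).restrict (fun v hv => hp g v hv)
  map_one' := by ext v; simp [LinearMap.restrict_apply]
  map_mul' g₁ g₂ := by ext v; simp [LinearMap.restrict_apply]

/-- A representation is completely reducible if the underlying module is the sum of its
irreducible invariant submodules. -/
def IsCompletelyReducibleRep {G : Type*} [Monoid G] {V : Type*} [AddCommMonoid V]
    [Module F V] (ρ : Representation F G V) : Prop :=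
  sSup {q : Submodule F V |
    ∃ hq : ∀ g : G, ∀ v ∈ q, ρ g v ∈ q, IsIrreducibleRep F (subRep F ρ q hq)} = ⊤

/-- The homogeneous component determined by `σ`: the sum of all irreducible invariant
submodules whose subrepresentation is isomorphic to `σ`. -/
noncomputable def homComponent {G : Type*} [Monoid G] {V W : Type*} [AddCommMonoid V]
    [Module F V] [AddCommMonoid W] [Module F W] (ρ : Representation F G V)
    (σ : Representation F G W) : Submodule F V :=
  sSup {q : Submodule F V |
    ∃ hq : ∀ g : G, ∀ v ∈ q, ρ g v ∈ q,
      IsIrreducibleRep F (subRep F ρ q hq) ∧ RepIso F (subRep F ρ q hq) σ}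

/-- The set of all homogeneous components of a representation. -/
noncomputable def homComponents {G : Type*} [Monoid G] {V : Type*} [AddCommMonoid V]
    [Module F V] (ρ : Representation F G V) : Set (Submodule F V) :=
  {S | ∃ (q : Submodule F V) (hq : ∀ g : G, ∀ v ∈ q, ρ g v ∈ q),
      IsIrreducibleRep F (subRep F ρ q hq) ∧ S = homComponent F ρ (subRep F ρ q hq)}

/-- A representation `ρ` lies over `σ` if it admits an invariant submodule whose
subrepresentation is isomorphic to `σ`. -/
def LiesOver {G : Type*} [Monoid G] {V W : Type*} [AddCommMonoid V] [Module F V]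
    [AddCommMonoid W] [Module F W] (ρ : Representation F G V) (σ : Representation F G W) :
    Prop :=
  ∃ (q : Submodule F V) (hq : ∀ g : G, ∀ v ∈ q, ρ g v ∈ q),
    RepIso F (subRep F ρ q hq) σ

/-- The stabilizer in `G` of a subspace of a representation space. -/
def stabSubgroup {G : Type*} [Group G] {V : Type*} [AddCommGroup V] [Module F V]
    (ρ : Representation F G V) (S : Submodule F V) : Subgroup G where
  carrier := {g : G | S.map (ρ g) = S}
  one_mem' := by
    show S.map (ρ 1) = S
    rw [map_one, Module.End.one_eq_id]
    exact Submodule.map_id S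
  mul_mem' := by
    intro a b ha hb
    show S.map (ρ (a * b)) = S
    rw [map_mul, Module.End.mul_eq_comp, Submodule.map_comp, hb, ha]
  inv_mem' := by
    intro a ha
    show S.map (ρ a⁻¹) = S
    conv_lhs => rw [← ha]
    rw [← Submodule.map_comp, ← Module.End.mul_eq_comp, ← map_mul, inv_mul_cancel, map_one,
      Module.End.one_eq_id, Submodule.map_id]

theorem stabSubgroup_mapsTo {G : Type*} [Group G] {V : Type*} [AddCommGroup V] [Module F V]
    (ρ : Representation F G V) (S : Submodule F V) :
    ∀ g : ↥(stabSubgroup F ρ S), ∀ v ∈ S, ρ (g : G) v ∈ S := by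
  intro g v hv
  have hg : S.map (ρ (g : G)) = S := g.2
  have := Submodule.mem_map_of_mem (f := ρ (g : G)) hv
  rwa [hg] at this

/-- Outer tensor product of representations of two groups. -/
noncomputable def outerRep {G₁ G₂ : Type*} [Monoid G₁] [Monoid G₂] {V₁ V₂ : Type*}
    [AddCommMonoid V₁] [Module F V₁] [AddCommMonoid V₂] [Module F V₂]
    (ρ₁ : Representation F G₁ V₁) (ρ₂ : Representation F G₂ V₂) :
    Representation F (G₁ × G₂) (V₁ ⊗[F] V₂) :=
  Representation.tprod (ρ₁.comp (MonoidHom.fst G₁ G₂)) (ρ₂.comp (MonoidHom.snd G₁ G₂))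

/-- A projective representation with factor set `α`. -/
def IsProjRep {G : Type*} [Group G] {W : Type*} [AddCommGroup W] [Module F W]
    (X : G → (W →ₗ[F] W)) (α : G → G → Fˣ) : Prop :=
  (∀ g : G, Function.Bijective (X g)) ∧
    ∀ g₁ g₂ : G, (X g₁) ∘ₗ (X g₂) = ((α g₁ g₂ : F)) • X (g₁ * g₂)

/-- Irreducibility of a projective representation: no proper nonzero invariant subspace. -/
def IsProjIrred {G : Type*} [Group G] {W : Type*} [AddCommGroup W] [Module F W]
    (X : G → (W →ₗ[F] W)) : Prop :=
  Nontrivial W ∧ ∀ p : Submodule F W, (∀ g : G, ∀ w ∈ p, X g w ∈ p) → p = ⊥ ∨ p = ⊤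

/-- `D` is a system of representatives for the `(H₁,H₂)`-double cosets in `G`. -/
def IsDCosetReps {G : Type*} [Group G] (H₁ H₂ : Subgroup G) (D : Set G) : Prop :=
  ∀ g : G, ∃! d : G, d ∈ D ∧ ∃ h₁ ∈ H₁, ∃ h₂ ∈ H₂, g = h₁ * d * h₂

end Preliminaries

section Induction

variable (F : Type*) [Field F] {G : Type*} [Group G] (H : Subgroup G)
variable {W : Type*} [AddCommGroup W] [Module F W] (σ : Representation F ↥H W)

/-- The submodule of relations defining the induced module `FG ⊗_{FH} W` as a quotient
of `FG ⊗_F W`. -/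
noncomputable def indRel : Submodule (MonoidAlgebra F G) (MonoidAlgebra F G ⊗[F] W) :=
  Submodule.span (MonoidAlgebra F G)
    {z | ∃ (x : H) (w : W),
      z = (MonoidAlgebra.single (x : G) (1 : F)) ⊗ₜ[F] w
            - (1 : MonoidAlgebra F G) ⊗ₜ[F] (σ x w)}

/-- The underlying space of the induced module `ind_H^G W = FG ⊗_{FH} W`. -/
noncomputable def IndCar := (MonoidAlgebra F G ⊗[F] W) ⧸ indRel F H σ

noncomputable instance : AddCommGroup (IndCar F H σ) :=
  inferInstanceAs (AddCommGroup ((MonoidAlgebra F G ⊗[F] W) ⧸ indRel F H σ))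

noncomputable instance : Module (MonoidAlgebra F G) (IndCar F H σ) :=
  inferInstanceAs (Module (MonoidAlgebra F G) ((MonoidAlgebra F G ⊗[F] W) ⧸ indRel F H σ))

noncomputable instance : Module F (IndCar F H σ) :=
  inferInstanceAs (Module F ((MonoidAlgebra F G ⊗[F] W) ⧸ indRel F H σ))

noncomputable instance : IsScalarTower F (MonoidAlgebra F G) (IndCar F H σ) :=
  inferInstanceAs (IsScalarTower F (MonoidAlgebra F G)
    ((MonoidAlgebra F G ⊗[F] W) ⧸ indRel F H σ))

/-- The induced representation of `G` on `ind_H^G W = FG ⊗_{FH} W`. -/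
noncomputable def IndRep : Representation F G (IndCar F H σ) where
  toFun g :=
    { toFun := fun v => (MonoidAlgebra.single g (1 : F) : MonoidAlgebra F G) • v
      map_add' := fun a b => smul_add _ a b
      map_smul' := fun c v => smul_comm _ c v }
  map_one' := by
    ext v
    show MonoidAlgebra.single (1 : G) (1 : F) • v = v
    rw [← MonoidAlgebra.one_def, one_smul]
  map_mul' g₁ g₂ := by
    ext v
    show MonoidAlgebra.single (g₁ * g₂) (1 : F) • v = _
    rw [show (MonoidAlgebra.single (g₁ * g₂) (1 : F) : MonoidAlgebra F G)
          = MonoidAlgebra.single g₁ 1 * MonoidAlgebra.single g₂ 1 by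
        rw [MonoidAlgebra.single_mul_single, one_mul], mul_smul]
    rfl

end Induction

section DirectSums

variable (F : Type*) [Field F] {G : Type*} [Monoid G]

/-- The direct sum of a family of representations. -/
noncomputable def dsumRep {ι : Type*} {V : ι → Type*} [∀ i, AddCommGroup (V i)]
    [∀ i, Module F (V i)] (ρ : ∀ i, Representation F G (V i)) :
    Representation F G (⨁ i, V i) where
  toFun g := DFinsupp.mapRange.linearMap (fun i => ρ i g)
  map_one' := by
    simp only [map_one]
    exact DFinsupp.mapRange.linearMap_id
  map_mul' g₁ g₂ := by
    simp only [map_mul, Module.End.mul_eq_comp]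
    exact DFinsupp.mapRange.linearMap_comp (fun i => ρ i g₁) (fun i => ρ i g₂)

end DirectSums

section Conjugation

variable {G : Type*} [Group G]

/-- Conjugation `x ↦ g x g⁻¹` as a monoid homomorphism of a normal subgroup. -/
def conjHom {N : Subgroup G} (hN : N.Normal) (g : G) : ↥N →* ↥N where
  toFun x := ⟨g * (x : G) * g⁻¹, hN.conj_mem x.1 x.2 g⟩
  map_one' := by ext; simp
  map_mul' x y := by ext; simp [mul_assoc]

/-- The conjugate subgroup `xHx⁻¹`. -/
def conjSubgroup (x : G) (H : Subgroup G) : Subgroup G :=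
  H.map (MulAut.conj x).toMonoidHom

/-- Conjugating back: the homomorphism `K → H`, `k ↦ x⁻¹ k x`, for `K ≤ xHx⁻¹`. -/
def unconjHom (x : G) (H : Subgroup G) {K : Subgroup G} (hK : K ≤ conjSubgroup x H) :
    ↥K →* ↥H where
  toFun k := ⟨x⁻¹ * (k : G) * x, by
    obtain ⟨h, hh, e⟩ := hK k.2
    have : x⁻¹ * (k : G) * x = h := by
      rw [← e]; simp [MulAut.conj_apply, mul_assoc]
    rw [this]; exact hh⟩
  map_one' := by ext; simp
  map_mul' a b := by
    ext
    show x⁻¹ * (↑a * ↑b) * x = (x⁻¹ * ↑a * x) * (x⁻¹ * ↑b * x)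
    group

/-- The homomorphism `K ∩ xHx⁻¹ → H` (with the source regarded as a subgroup of `K`),
given by `k ↦ x⁻¹ k x`. -/
def mackeyHom (x : G) (H K : Subgroup G) :
    ↥((K ⊓ conjSubgroup x H).subgroupOf K) →* ↥H where
  toFun l := ⟨x⁻¹ * ((l : ↥K) : G) * x, by
    have h2 : ((l : ↥K) : G) ∈ K ⊓ conjSubgroup x H := l.2
    obtain ⟨h, hh, e⟩ := h2.2
    have : x⁻¹ * ((l : ↥K) : G) * x = h := by
      rw [← e]; simp [MulAut.conj_apply, mul_assoc]
    rw [this]; exact hh⟩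
  map_one' := by ext; simp
  map_mul' a b := by
    ext
    show x⁻¹ * (↑↑a * ↑↑b) * x = (x⁻¹ * ↑↑a * x) * (x⁻¹ * ↑↑b * x)
    group

end Conjugation

section CCMachinery

namespace CC

variable {F : Type*} [Field F] {G : Type*} [Monoid G] {V V' V'' W : Type*}
  [AddCommGroup V] [Module F V] [AddCommGroup V'] [Module F V']
  [AddCommGroup V''] [Module F V''] [AddCommGroup W] [Module F W]

theorem repIso_refl (ρ : Representation F G V) : RepIso F ρ ρ :=
  ⟨LinearEquiv.refl F V, fun _ _ => rfl⟩

theorem repIso_symm {ρ : Representation F G V} {ρ' : Representation F G V'}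
    (h : RepIso F ρ ρ') : RepIso F ρ' ρ := by
  obtain ⟨e, he⟩ := h
  refine ⟨e.symm, fun g v => ?_⟩
  apply e.injective
  rw [e.apply_symm_apply, he, e.apply_symm_apply]

theorem repIso_trans {ρ : Representation F G V} {ρ' : Representation F G V'}
    {ρ'' : Representation F G V''} (h : RepIso F ρ ρ') (h' : RepIso F ρ' ρ'') :
    RepIso F ρ ρ'' := by
  obtain ⟨e, he⟩ := h; obtain ⟨e', he'⟩ := h'
  exact ⟨e.trans e', fun g v => by simp [he, he']⟩

theorem repIso_comp {H : Type*} [Monoid H] {ρ : Representation F G V}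
    {ρ' : Representation F G V'} (h : RepIso F ρ ρ') (f : H →* G) :
    RepIso F (ρ.comp f) (ρ'.comp f) := by
  obtain ⟨e, he⟩ := h
  exact ⟨e, fun g v => he (f g) v⟩

@[simp] theorem subRep_apply_coe {ρ : Representation F G V} {q : Submodule F V}
    {hq : ∀ g : G, ∀ v ∈ q, ρ g v ∈ q} (g : G) (v : ↥q) :
    (subRep F ρ q hq g v : V) = ρ g (v : V) := rfl

theorem repIso_irred {ρ : Representation F G V} {ρ' : Representation F G V'}
    (h : RepIso F ρ ρ') (hir : IsIrreducibleRep F ρ) : IsIrreducibleRep F ρ' := by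
  obtain ⟨e, he⟩ := h
  obtain ⟨hnt, hmin⟩ := hir
  constructor
  · exact e.symm.toEquiv.nontrivial
  · intro p hp
    have hinv : ∀ g : G, ∀ v ∈ p.comap (e : V →ₗ[F] V'), ρ g v ∈ p.comap (e : V →ₗ[F] V') := by
      intro g v hv
      simp only [Submodule.mem_comap, LinearEquiv.coe_coe] at hv ⊢
      rw [he]
      exact hp g _ hv
    have hmap : (p.comap (e : V →ₗ[F] V')).map (e : V →ₗ[F] V') = p :=
      Submodule.map_comap_eq_of_surjective e.surjective p
    rcases hmin _ hinv with h | h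
    · left; rw [← hmap, h, Submodule.map_bot]
    · right; rw [← hmap, h, Submodule.map_top, e.range]

/-- In an irreducible subrepresentation, invariant submodules below `q` are `⊥` or `q`. -/
theorem subInvEq {ρ : Representation F G V} {q : Submodule F V}
    {hq : ∀ g : G, ∀ v ∈ q, ρ g v ∈ q} (hirr : IsIrreducibleRep F (subRep F ρ q hq))
    (p : Submodule F V) (hpq : p ≤ q) (hp : ∀ g : G, ∀ v ∈ p, ρ g v ∈ p) :
    p = ⊥ ∨ p = q := by
  set p' : Submodule F ↥q := p.comap q.subtype with hp'
  have hinv : ∀ g : G, ∀ v ∈ p', subRep F ρ q hq g v ∈ p' := by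
    intro g v hv
    simp only [hp', Submodule.mem_comap, Submodule.coe_subtype] at hv ⊢
    exact hp g _ hv
  have hmap : p'.map q.subtype = p := by
    rw [hp', Submodule.map_comap_subtype, inf_eq_right.mpr hpq]
  rcases hirr.2 p' hinv with h | h
  · left; rw [← hmap, h, Submodule.map_bot]
  · right; rw [← hmap, h, Submodule.map_top, Submodule.range_subtype]

theorem ne_bot_of_irred {ρ : Representation F G V} {q : Submodule F V}
    {hq : ∀ g : G, ∀ v ∈ q, ρ g v ∈ q} (hirr : IsIrreducibleRep F (subRep F ρ q hq)) :
    q ≠ ⊥ := by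
  intro h
  subst h
  obtain ⟨⟨a, b, hab⟩, -⟩ := hirr
  exact hab (Subsingleton.elim a b)

/-- Pushing an invariant submodule forward along a map that intertwines on it. -/
theorem pushInv {ρ : Representation F G V} {ρ' : Representation F G V'} (f : V →ₗ[F] V')
    {q : Submodule F V} (hq : ∀ g : G, ∀ v ∈ q, ρ g v ∈ q)
    (hf : ∀ g : G, ∀ v ∈ q, f (ρ g v) = ρ' g (f v)) :
    ∀ g : G, ∀ v ∈ q.map f, ρ' g v ∈ q.map f := by
  rintro g v ⟨w, hw, rfl⟩
  exact ⟨ρ g w, hq g w hw, hf g w hw⟩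

/-- Pushing forward along an injective-on-`q` intertwining map gives an isomorphic
subrepresentation. -/
theorem pushIso {ρ : Representation F G V} {ρ' : Representation F G V'} (f : V →ₗ[F] V')
    {q : Submodule F V} (hq : ∀ g : G, ∀ v ∈ q, ρ g v ∈ q)
    (hf : ∀ g : G, ∀ v ∈ q, f (ρ g v) = ρ' g (f v))
    (hinj : ∀ v ∈ q, f v = 0 → v = 0) :
    RepIso F (subRep F ρ q hq) (subRep F ρ' (q.map f) (pushInv f hq hf)) := by
  have hbij : Function.Bijective (f.submoduleMap q) := by
    constructor
    · intro a b hab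
      have : f (a : V) = f (b : V) := congrArg Subtype.val hab
      have : f ((a : V) - (b : V)) = 0 := by rw [map_sub, this, sub_self]
      have := hinj _ (sub_mem a.2 b.2) this
      exact Subtype.ext (by rw [← sub_eq_zero]; exact this)
    · exact f.submoduleMap_surjective q
  refine ⟨LinearEquiv.ofBijective (f.submoduleMap q) hbij, fun g v => ?_⟩
  apply Subtype.ext
  exact hf g (v : V) v.2

/-- Pushing forward an irreducible invariant submodule along an intertwining map with
nonzero image gives an isomorphic irreducible subrepresentation. -/
theorem pushIrred {ρ : Representation F G V} {ρ' : Representation F G V'} (f : V →ₗ[F] V')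
    {q : Submodule F V} (hq : ∀ g : G, ∀ v ∈ q, ρ g v ∈ q)
    (hf : ∀ g : G, ∀ v ∈ q, f (ρ g v) = ρ' g (f v))
    (hirr : IsIrreducibleRep F (subRep F ρ q hq)) (hne : q.map f ≠ ⊥) :
    IsIrreducibleRep F (subRep F ρ' (q.map f) (pushInv f hq hf)) ∧
      RepIso F (subRep F ρ q hq) (subRep F ρ' (q.map f) (pushInv f hq hf)) := by
  have hker : q ⊓ LinearMap.ker f = ⊥ ∨ q ⊓ LinearMap.ker f = q := by
    apply subInvEq hirr _ inf_le_left
    intro g v hv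
    rw [Submodule.mem_inf] at hv ⊢
    have hv2 : f v = 0 := hv.2
    refine ⟨hq g v hv.1, ?_⟩
    rw [LinearMap.mem_ker, hf g v hv.1, hv2, map_zero]
  rcases hker with h | h
  · have hinj : ∀ v ∈ q, f v = 0 → v = 0 := by
      intro v hv hfv
      have : v ∈ q ⊓ LinearMap.ker f := ⟨hv, hfv⟩
      rw [h] at this
      exact this
    have hiso := pushIso f hq hf hinj
    exact ⟨repIso_irred hiso hirr, hiso⟩
  · exfalso
    apply hne
    rw [Submodule.eq_bot_iff]
    rintro v ⟨w, hw, rfl⟩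
    have : w ∈ q ⊓ LinearMap.ker f := by rw [h]; exact hw
    exact this.2

theorem inv_sSup {ρ : Representation F G V} {S : Set (Submodule F V)}
    (h : ∀ p ∈ S, ∀ g : G, ∀ v ∈ p, ρ g v ∈ p) :
    ∀ g : G, ∀ v ∈ sSup S, ρ g v ∈ sSup S := by
  intro g v hv
  rw [sSup_eq_iSup'] at hv ⊢
  refine Submodule.iSup_induction (motive := fun x => ρ g x ∈ ⨆ p : S, (p : Submodule F V))
    _ hv ?_ ?_ ?_
  · rintro ⟨p, hp⟩ x hx
    exact le_iSup (fun p : S => (p : Submodule F V)) ⟨p, hp⟩ (h p hp g x hx)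
  · show ρ g 0 ∈ _
    rw [map_zero]; exact zero_mem _
  · intro x y hx hy
    show ρ g (x + y) ∈ _
    rw [map_add]; exact add_mem hx hy

theorem linear_sSup_closed {f : V →ₗ[F] V} {S : Set (Submodule F V)}
    (h : ∀ p ∈ S, ∀ v ∈ p, f v ∈ sSup S) : ∀ v ∈ sSup S, f v ∈ sSup S := by
  intro v hv
  rw [sSup_eq_iSup'] at hv
  refine Submodule.iSup_induction (motive := fun x => f x ∈ sSup S) _ hv ?_ ?_ ?_
  · rintro ⟨p, hp⟩ x hx
    exact h p hp x hx
  · show f 0 ∈ _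
    rw [map_zero]; exact zero_mem _
  · intro x y hx hy
    show f (x + y) ∈ _
    rw [map_add]; exact add_mem hx hy

theorem inv_sup {ρ : Representation F G V} {p q : Submodule F V}
    (hp : ∀ g : G, ∀ v ∈ p, ρ g v ∈ p) (hq : ∀ g : G, ∀ v ∈ q, ρ g v ∈ q) :
    ∀ g : G, ∀ v ∈ p ⊔ q, ρ g v ∈ p ⊔ q := by
  intro g v hv
  rw [Submodule.mem_sup] at hv ⊢
  obtain ⟨a, ha, b, hb, rfl⟩ := hv
  exact ⟨ρ g a, hp g a ha, ρ g b, hq g b hb, (map_add _ _ _).symm⟩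

theorem map_eq_bot_iff' {R M M₂ : Type*} [Ring R] [AddCommGroup M] [Module R M]
    [AddCommGroup M₂] [Module R M₂] (f : M →ₗ[R] M₂) (p : Submodule R M) :
    p.map f = ⊥ ↔ p ≤ LinearMap.ker f := by
  rw [eq_bot_iff, Submodule.map_le_iff_le_comap]
  rfl

/-- The quotient representation on `V ⧸ A` for an invariant submodule `A`. -/
def quotRep (ρ : Representation F G V) (A : Submodule F V)
    (hA : ∀ g : G, ∀ v ∈ A, ρ g v ∈ A) : Representation F G (V ⧸ A) where
  toFun g := A.mapQ A (ρ g) (fun v hv => hA g v hv)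
  map_one' := by
    apply Submodule.linearMap_qext
    ext v
    simp [Submodule.mapQ_apply]
  map_mul' g₁ g₂ := by
    apply Submodule.linearMap_qext
    ext v
    simp [Submodule.mapQ_apply]

theorem quotRep_mk {ρ : Representation F G V} {A : Submodule F V}
    {hA : ∀ g : G, ∀ v ∈ A, ρ g v ∈ A} (g : G) (v : V) :
    A.mkQ (ρ g v) = quotRep ρ A hA g (A.mkQ v) := rfl

/-- Existence of invariant complements inside a completely reducible representation. -/
theorem exists_compl {ρ : Representation F G V} {S : Set (Submodule F V)}
    (hS : ∀ p ∈ S, ∃ hp : ∀ g : G, ∀ v ∈ p, ρ g v ∈ p,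
      p = ⊥ ∨ IsIrreducibleRep F (subRep F ρ p hp))
    (hsup : sSup S = ⊤) (X : Submodule F V) (hX : ∀ g : G, ∀ v ∈ X, ρ g v ∈ X) :
    ∃ C : Submodule F V, (∀ g : G, ∀ v ∈ C, ρ g v ∈ C) ∧ IsCompl X C := by
  set s : Set (Submodule F V) :=
    {C | (∀ g : G, ∀ v ∈ C, ρ g v ∈ C) ∧ X ⊓ C = ⊥} with hs
  have hzorn : ∀ c ⊆ s, IsChain (· ≤ ·) c → ∀ y ∈ c, ∃ ub ∈ s, ∀ z ∈ c, z ≤ ub := by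
    intro c hcs hchain y hy
    refine ⟨sSup c, ⟨?_, ?_⟩, fun z hz => le_sSup hz⟩
    · intro g v hv
      rw [Submodule.mem_sSup_of_directed ⟨y, hy⟩ hchain.directedOn] at hv ⊢
      obtain ⟨p, hp, hvp⟩ := hv
      exact ⟨p, hp, (hcs hp).1 g v hvp⟩
    · rw [eq_bot_iff]
      rintro v ⟨hv1, hv2⟩
      rw [SetLike.mem_coe, Submodule.mem_sSup_of_directed ⟨y, hy⟩ hchain.directedOn] at hv2
      obtain ⟨p, hp, hvp⟩ := hv2
      have : v ∈ X ⊓ p := ⟨hv1, hvp⟩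
      rw [(hcs hp).2] at this
      exact this
  obtain ⟨m, -, hm⟩ := zorn_le_nonempty₀ s hzorn ⊥ ⟨fun g v hv => by simp_all, inf_bot_eq X⟩
  obtain ⟨⟨hminv, hmbot⟩, hmax⟩ := hm
  have htop : sSup S ≤ X ⊔ m := by
    apply sSup_le
    intro p hpS
    obtain ⟨hpinv, hpalt⟩ := hS p hpS
    rcases hpalt with rfl | hpirr
    · exact bot_le
    by_contra hnle
    have hXm : ∀ g : G, ∀ v ∈ X ⊔ m, ρ g v ∈ X ⊔ m := inv_sup hX hminv
    have hr : p ⊓ (X ⊔ m) = ⊥ ∨ p ⊓ (X ⊔ m) = p := by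
      apply subInvEq hpirr _ inf_le_left
      intro g v hv
      exact ⟨hpinv g v hv.1, hXm g v hv.2⟩
    rcases hr with hr | hr
    · have hmem : m ⊔ p ∈ s := by
        refine ⟨inv_sup hminv hpinv, ?_⟩
        rw [eq_bot_iff]
        rintro v ⟨hv1, hv2⟩
        rw [SetLike.mem_coe, Submodule.mem_sup] at hv2
        obtain ⟨c, hc, w, hw, rfl⟩ := hv2
        have hwmem : w ∈ p ⊓ (X ⊔ m) := by
          refine ⟨hw, ?_⟩
          have : w = (c + w) - c := (add_sub_cancel_left c w).symm
          rw [this]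
          exact sub_mem (Submodule.mem_sup_left hv1) (Submodule.mem_sup_right hc)
        rw [hr] at hwmem
        rw [(Submodule.mem_bot F).mp hwmem, add_zero] at hv1 ⊢
        have : c ∈ X ⊓ m := ⟨hv1, hc⟩
        rw [hmbot] at this
        simpa using this
      have := hmax hmem le_sup_left
      exact hnle (le_trans (le_trans le_sup_right this) le_sup_right)
    · exact hnle (hr ▸ inf_le_right)
  refine ⟨m, hminv, ?_, ?_⟩
  · rw [disjoint_iff, hmbot]
  · rw [codisjoint_iff, eq_top_iff, ← hsup]
    exact htop

/-- The projection onto an invariant direct summand is equivariant. -/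
theorem proj_equivariant {ρ : Representation F G V} {X C : Submodule F V}
    (hX : ∀ g : G, ∀ v ∈ X, ρ g v ∈ X) (hC : ∀ g : G, ∀ v ∈ C, ρ g v ∈ C)
    (h : IsCompl X C) (g : G) (v : V) :
    (X.subtype ∘ₗ X.projectionOnto C h) (ρ g v) =
      ρ g ((X.subtype ∘ₗ X.projectionOnto C h) v) := by
  set π : V →ₗ[F] V := X.subtype ∘ₗ X.projectionOnto C h with hπ
  have hv : v ∈ X ⊔ C := by rw [codisjoint_iff.mp h.codisjoint]; trivial
  rw [Submodule.mem_sup] at hv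
  obtain ⟨x, hx, c, hc, rfl⟩ := hv
  have e1 : ∀ w, w ∈ X → π w = w := by
    intro w hw
    simp [hπ, Submodule.projectionOnto_apply_left h ⟨w, hw⟩]
  have e2 : ∀ w, w ∈ C → π w = 0 := by
    intro w hw
    simp [hπ, Submodule.projectionOnto_apply_of_mem_right h hw]
  have l1 : π (ρ g (x + c)) = ρ g x := by
    rw [map_add (ρ g), map_add π, e1 _ (hX g x hx), e2 _ (hC g c hc), add_zero]
  have l2 : π (x + c) = x := by
    rw [map_add π, e1 x hx, e2 c hc, add_zero]
  rw [l1, l2]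

/-- Any nonzero invariant submodule of a completely reducible representation contains
an irreducible invariant submodule isomorphic to a member of the generating family. -/
theorem exists_irred_le {ρ : Representation F G V} {S : Set (Submodule F V)}
    (hS : ∀ p ∈ S, ∃ hp : ∀ g : G, ∀ v ∈ p, ρ g v ∈ p,
      p = ⊥ ∨ IsIrreducibleRep F (subRep F ρ p hp))
    (hsup : sSup S = ⊤) (U : Submodule F V) (hU : ∀ g : G, ∀ v ∈ U, ρ g v ∈ U)
    (hUne : U ≠ ⊥) :
    ∃ (q : Submodule F V) (hq : ∀ g : G, ∀ v ∈ q, ρ g v ∈ q), q ≤ U ∧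
      IsIrreducibleRep F (subRep F ρ q hq) ∧
      ∃ p ∈ S, ∃ hp : ∀ g : G, ∀ v ∈ p, ρ g v ∈ p,
        RepIso F (subRep F ρ p hp) (subRep F ρ q hq) := by
  obtain ⟨C, hCinv, hcompl⟩ := exists_compl hS hsup U hU
  set π : V →ₗ[F] V := U.subtype ∘ₗ U.projectionOnto C hcompl with hπ
  have hequiv : ∀ (g : G) (v : V), π (ρ g v) = ρ g (π v) :=
    proj_equivariant hU hCinv hcompl
  have hrange : LinearMap.range π = U := by
    apply le_antisymm
    · rintro v ⟨w, rfl⟩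
      exact (U.projectionOnto C hcompl w).2
    · intro v hv
      refine ⟨v, ?_⟩
      simp [hπ, Submodule.projectionOnto_apply_left hcompl ⟨v, hv⟩]
  have hex : ∃ p ∈ S, p.map π ≠ ⊥ := by
    by_contra hall
    push_neg at hall
    apply hUne
    rw [eq_bot_iff, ← hrange, LinearMap.range_eq_map, ← hsup, sSup_eq_iSup',
      Submodule.map_iSup]
    apply iSup_le
    rintro ⟨p, hp⟩
    rw [hall p hp]
  obtain ⟨p, hpS, hpne⟩ := hex
  obtain ⟨hpinv, hpalt⟩ := hS p hpS
  have hpirr : IsIrreducibleRep F (subRep F ρ p hpinv) := by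
    rcases hpalt with rfl | h
    · exact absurd (Submodule.map_bot π) hpne
    · exact h
  have hf : ∀ g : G, ∀ v ∈ p, π (ρ g v) = ρ g (π v) := fun g v _ => hequiv g v
  obtain ⟨hirr', hiso'⟩ := pushIrred π hpinv hf hpirr hpne
  refine ⟨p.map π, pushInv π hpinv hf, ?_, hirr', p, hpS, hpinv, hiso'⟩
  rw [← hrange, LinearMap.range_eq_map]
  exact Submodule.map_mono le_top

theorem le_homComponent {ρ : Representation F G V} {σ : Representation F G W}
    {q : Submodule F V} (hq : ∀ g : G, ∀ v ∈ q, ρ g v ∈ q)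
    (h1 : IsIrreducibleRep F (subRep F ρ q hq)) (h2 : RepIso F (subRep F ρ q hq) σ) :
    q ≤ homComponent F ρ σ :=
  le_sSup ⟨hq, h1, h2⟩

theorem inv_homComponent {ρ : Representation F G V} {σ : Representation F G W} :
    ∀ g : G, ∀ v ∈ homComponent F ρ σ, ρ g v ∈ homComponent F ρ σ := by
  apply inv_sSup
  rintro p ⟨hp, -, -⟩
  exact hp

/-- The homogeneous component of a completely reducible representation is the sum of the
members of the generating family isomorphic to `σ`. -/
theorem homComponent_eq {ρ : Representation F G V} {σ : Representation F G W}
    {S : Set (Submodule F V)}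
    (hS : ∀ p ∈ S, ∃ hp : ∀ g : G, ∀ v ∈ p, ρ g v ∈ p,
      p = ⊥ ∨ IsIrreducibleRep F (subRep F ρ p hp))
    (hsup : sSup S = ⊤) :
    homComponent F ρ σ = sSup {p | p ∈ S ∧ ∃ hp : ∀ g : G, ∀ v ∈ p, ρ g v ∈ p,
      IsIrreducibleRep F (subRep F ρ p hp) ∧ RepIso F (subRep F ρ p hp) σ} := by
  apply le_antisymm
  · apply sSup_le
    rintro q ⟨hq, hirr, hiso⟩
    set A := sSup {p | p ∈ S ∧ ∃ hp : ∀ g : G, ∀ v ∈ p, ρ g v ∈ p,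
      IsIrreducibleRep F (subRep F ρ p hp) ∧ RepIso F (subRep F ρ p hp) σ} with hA
    have hAinv : ∀ g : G, ∀ v ∈ A, ρ g v ∈ A := by
      apply inv_sSup
      rintro p ⟨-, hp, -, -⟩
      exact hp
    set ρQ := quotRep ρ A hAinv with hρQ
    have hmkq : ∀ (g : G) (v : V), A.mkQ (ρ g v) = ρQ g (A.mkQ v) := fun g v => rfl
    by_cases hmap : q.map A.mkQ = ⊥
    · rw [map_eq_bot_iff', Submodule.ker_mkQ] at hmap
      exact hmap
    · exfalso
      have hfq : ∀ g : G, ∀ v ∈ q, A.mkQ (ρ g v) = ρQ g (A.mkQ v) := fun g v _ => rfl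
      obtain ⟨hirrq', hisoq'⟩ := pushIrred A.mkQ hq hfq hirr hmap
      -- the quotient is generated by the images of members of S
      have hS' : ∀ p' ∈ (fun p => Submodule.map A.mkQ p) '' S,
          ∃ hp' : ∀ g : G, ∀ v ∈ p', ρQ g v ∈ p',
            p' = ⊥ ∨ IsIrreducibleRep F (subRep F ρQ p' hp') := by
        rintro p' ⟨p, hpS, rfl⟩
        obtain ⟨hpinv, hpalt⟩ := hS p hpS
        have hfp : ∀ g : G, ∀ v ∈ p, A.mkQ (ρ g v) = ρQ g (A.mkQ v) := fun g v _ => rfl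
        refine ⟨pushInv A.mkQ hpinv hfp, ?_⟩
        by_cases hb : p.map A.mkQ = ⊥
        · exact Or.inl hb
        rcases hpalt with rfl | hpirr
        · exact Or.inl (Submodule.map_bot A.mkQ)
        · exact Or.inr (pushIrred A.mkQ hpinv hfp hpirr hb).1
      have hsup' : sSup ((fun p => Submodule.map A.mkQ p) '' S) = ⊤ := by
        have h1 : sSup ((fun p => Submodule.map A.mkQ p) '' S)
            = Submodule.map A.mkQ (sSup S) := by
          conv_rhs => rw [sSup_eq_iSup']
          rw [Submodule.map_iSup, sSup_image, iSup_subtype'']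
        rw [h1, hsup, Submodule.map_top, Submodule.range_mkQ]
      obtain ⟨r, hr, hrle, hrirr, p', hp'mem, hp'inv, hp'iso⟩ :=
        exists_irred_le hS' hsup' (q.map A.mkQ) (pushInv A.mkQ hq hfq) hmap
      have hre : r = q.map A.mkQ := by
        rcases subInvEq hirrq' r hrle hr with h | h
        · exact absurd h (ne_bot_of_irred hrirr)
        · exact h
      subst hre
      have hq'iso : RepIso F (subRep F ρQ (q.map A.mkQ) hr) σ :=
        repIso_trans (repIso_symm hisoq') hiso
      have hp'full : RepIso F (subRep F ρQ p' hp'inv) σ := repIso_trans hp'iso hq'iso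
      have hp'irr : IsIrreducibleRep F (subRep F ρQ p' hp'inv) :=
        repIso_irred (repIso_symm hp'iso) hrirr
      obtain ⟨p, hpS, rfl⟩ := hp'mem
      have hp'ne : p.map A.mkQ ≠ ⊥ := ne_bot_of_irred hp'irr
      obtain ⟨hpinv, hpalt⟩ := hS p hpS
      have hpirr : IsIrreducibleRep F (subRep F ρ p hpinv) := by
        rcases hpalt with rfl | h
        · exact absurd (Submodule.map_bot A.mkQ) hp'ne
        · exact h
      have hfp : ∀ g : G, ∀ v ∈ p, A.mkQ (ρ g v) = ρQ g (A.mkQ v) := fun g v _ => rfl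
      have hiso2 := (pushIrred A.mkQ hpinv hfp hpirr hp'ne).2
      have hisoP : RepIso F (subRep F ρ p hpinv) σ := repIso_trans hiso2 hp'full
      have hpA : p ≤ A := le_sSup ⟨hpS, hpinv, hpirr, hisoP⟩
      apply hp'ne
      rw [eq_bot_iff, ← Submodule.mkQ_map_self (p := A)]
      exact Submodule.map_mono hpA
  · apply sSup_le_sSup
    rintro p ⟨-, hp, hirr, hiso⟩
    exact ⟨hp, hirr, hiso⟩

end CC

end CCMachinery

section CCInd

namespace CC

variable {F : Type*} [Field F] {G : Type*} [Group G] {H : Subgroup G}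
variable {S : Type*} [AddCommGroup S] [Module F S] (τ : Representation F ↥H S)

/-- The canonical map `s ↦ [g ⊗ s]` into the induced module. -/
noncomputable def indMk (g : G) : S →ₗ[F] IndCar F H τ :=
  ((LinearMap.restrictScalars F (indRel F H τ).mkQ) ∘ₗ
    (TensorProduct.mk F (MonoidAlgebra F G) S (MonoidAlgebra.single g 1)) :
      S →ₗ[F] (MonoidAlgebra F G ⊗[F] S) ⧸ indRel F H τ)

theorem indMk_apply (g : G) (s : S) :
    indMk τ g s = (indRel F H τ).mkQ ((MonoidAlgebra.single g 1) ⊗ₜ[F] s) := rfl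

theorem indMk_rel (g : G) (h : ↥H) (s : S) :
    indMk τ (g * h) s = indMk τ g (τ h s) := by
  rw [indMk_apply, indMk_apply, Submodule.mkQ_apply, Submodule.mkQ_apply]
  apply (Submodule.Quotient.eq _).mpr
  have key : (MonoidAlgebra.single (g * (h : G)) (1 : F)) ⊗ₜ[F] s
      - (MonoidAlgebra.single g (1 : F)) ⊗ₜ[F] (τ h s)
      = (MonoidAlgebra.single g (1 : F) : MonoidAlgebra F G) •
        ((MonoidAlgebra.single (h : G) (1 : F)) ⊗ₜ[F] s
          - (1 : MonoidAlgebra F G) ⊗ₜ[F] (τ h s)) := by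
    rw [smul_sub, TensorProduct.smul_tmul', TensorProduct.smul_tmul', smul_eq_mul,
      smul_eq_mul, MonoidAlgebra.single_mul_single, one_mul, mul_one]
  rw [key]
  exact Submodule.smul_mem _ _ (Submodule.subset_span ⟨h, s, rfl⟩)

theorem indMk_hmul (h : ↥H) (s : S) : indMk τ (h : G) s = indMk τ 1 (τ h s) := by
  have := indMk_rel τ 1 h s
  rwa [one_mul] at this

theorem indRep_indMk (g g' : G) (s : S) :
    IndRep F H τ g (indMk τ g' s) = indMk τ (g * g') s := by
  show (MonoidAlgebra.single g (1 : F) : MonoidAlgebra F G) •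
      ((indRel F H τ).mkQ ((MonoidAlgebra.single g' 1) ⊗ₜ[F] s)) = _
  rw [← map_smul, TensorProduct.smul_tmul', smul_eq_mul, MonoidAlgebra.single_mul_single,
    one_mul]
  rfl

theorem indMk_span : ⨆ g : G, LinearMap.range (indMk τ g) = ⊤ := by
  rw [eq_top_iff]
  rintro z -
  obtain ⟨w, rfl⟩ := (indRel F H τ).mkQ_surjective z
  induction w using TensorProduct.induction_on with
  | zero => rw [map_zero]; exact zero_mem _
  | add x y hx hy => rw [map_add]; exact add_mem hx hy
  | tmul a s =>
    induction a using MonoidAlgebra.induction_linear with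
    | zero =>
      rw [TensorProduct.zero_tmul, map_zero]; exact zero_mem _
    | add a b ha hb =>
      rw [TensorProduct.add_tmul, map_add]; exact add_mem ha hb
    | single g c =>
      have : (MonoidAlgebra.single g (1 : F)) ⊗ₜ[F] (c • s)
          = (MonoidAlgebra.single g c : MonoidAlgebra F G) ⊗ₜ[F] s := by
        rw [TensorProduct.tmul_smul, TensorProduct.smul_tmul', MonoidAlgebra.smul_single',
          mul_one]
      rw [← this]
      exact le_iSup (fun g : G => LinearMap.range (indMk τ g)) g ⟨c • s, rfl⟩

variable {V : Type*} [AddCommGroup V] [Module F V]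

/-- Lifting an intertwining map `S → V` to the induced module. -/
noncomputable def indLiftPre (ρ : Representation F G V) (j : S →ₗ[F] V) :
    MonoidAlgebra F G ⊗[F] S →ₗ[F] V :=
  TensorProduct.lift (Finsupp.lsum F (fun g : G =>
    LinearMap.toSpanSingleton F (S →ₗ[F] V) ((ρ g) ∘ₗ j)) ∘ₗ
      (MonoidAlgebra.coeffLinearEquiv F).toLinearMap)

theorem indLiftPre_single (ρ : Representation F G V) (j : S →ₗ[F] V) (g : G) (c : F) (s : S) :
    indLiftPre ρ j ((MonoidAlgebra.single g c) ⊗ₜ[F] s) = c • ρ g (j s) := by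
  rw [indLiftPre, TensorProduct.lift.tmul, LinearMap.comp_apply, LinearEquiv.coe_coe,
    MonoidAlgebra.coeffLinearEquiv_apply, MonoidAlgebra.coeff_single]
  erw [Finsupp.lsum_single]
  rfl

theorem indLiftPre_vanish (ρ : Representation F G V) (j : S →ₗ[F] V)
    (hj : ∀ (h : ↥H) (s : S), j (τ h s) = ρ (h : G) (j s)) :
    ∀ z ∈ indRel F H τ, indLiftPre ρ j z = 0 := by
  have key : ∀ z ∈ indRel F H τ, ∀ a : MonoidAlgebra F G, indLiftPre ρ j (a • z) = 0 := by
    intro z hz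
    refine Submodule.span_induction ?_ ?_ ?_ ?_ hz
    · rintro x ⟨h, w, rfl⟩ a
      induction a using MonoidAlgebra.induction_linear with
      | zero => rw [zero_smul, map_zero]
      | add a b ha hb => rw [add_smul, map_add, ha, hb, add_zero]
      | single g c =>
        rw [smul_sub, TensorProduct.smul_tmul', TensorProduct.smul_tmul', map_sub]
        have h1 : (MonoidAlgebra.single g c : MonoidAlgebra F G) • MonoidAlgebra.single (h : G) (1 : F)
            = MonoidAlgebra.single (g * (h : G)) c := by
          rw [smul_eq_mul, MonoidAlgebra.single_mul_single, mul_one]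
        have h2 : (MonoidAlgebra.single g c : MonoidAlgebra F G) • (1 : MonoidAlgebra F G)
            = MonoidAlgebra.single g c := by
          rw [smul_eq_mul, mul_one]
        rw [h1, h2, indLiftPre_single, indLiftPre_single, hj, map_mul,
          Module.End.mul_apply, sub_self]
    · intro a; rw [smul_zero, map_zero]
    · intro x y _ _ hx hy a; rw [smul_add, map_add, hx a, hy a, add_zero]
    · intro c x _ hx a
      rw [smul_smul]
      exact hx (a * c)
  intro z hz
  have := key z hz 1
  rwa [one_smul] at this

/-- Descending a linear map vanishing on the relations to the induced module. -/
noncomputable def indDesc (f : MonoidAlgebra F G ⊗[F] S →ₗ[F] V)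
    (hf : ∀ z ∈ indRel F H τ, f z = 0) : IndCar F H τ →ₗ[F] V :=
  (Submodule.liftQ ((indRel F H τ).restrictScalars F) f (fun z hz => hf z hz)) ∘ₗ
    (Submodule.Quotient.restrictScalarsEquiv F (indRel F H τ)).symm.toLinearMap

theorem indDesc_mk (f : MonoidAlgebra F G ⊗[F] S →ₗ[F] V)
    (hf : ∀ z ∈ indRel F H τ, f z = 0) (w : MonoidAlgebra F G ⊗[F] S) :
    indDesc τ f hf ((indRel F H τ).mkQ w) = f w := by
  have h0 : indDesc τ f hf ((indRel F H τ).mkQ w)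
      = (Submodule.liftQ ((indRel F H τ).restrictScalars F) f (fun z hz => hf z hz))
        ((Submodule.Quotient.restrictScalarsEquiv F (indRel F H τ)).symm
          (Submodule.Quotient.mk w)) := rfl
  rw [h0, Submodule.Quotient.restrictScalarsEquiv_symm_mk]
  exact Submodule.liftQ_apply _ _ _

theorem ind_ext {f f' : IndCar F H τ →ₗ[F] V}
    (h : ∀ (g : G) (s : S), f (indMk τ g s) = f' (indMk τ g s)) : f = f' := by
  ext z
  have hz : z ∈ ⨆ g : G, LinearMap.range (indMk τ g) := by rw [indMk_span]; trivial
  refine Submodule.iSup_induction (motive := fun z => f z = f' z) _ hz ?_ ?_ ?_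
  · rintro g z ⟨s, rfl⟩
    exact h g s
  · show f 0 = f' 0
    rw [map_zero, map_zero]
  · intro x y hx hy
    show f (x + y) = f' (x + y)
    rw [map_add, map_add, hx, hy]

open scoped Classical

/-- The projection from the induced module back to `S` reading off the `H`-component. -/
noncomputable def indProjAux : MonoidAlgebra F G ⊗[F] S →ₗ[F] S :=
  TensorProduct.lift (Finsupp.lsum F (fun g : G =>
    LinearMap.toSpanSingleton F (S →ₗ[F] S)
      (if hg : g ∈ H then (τ ⟨g, hg⟩ : S →ₗ[F] S) else 0)) ∘ₗ
      (MonoidAlgebra.coeffLinearEquiv F).toLinearMap)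

theorem indProjAux_single (g : G) (c : F) (s : S) :
    indProjAux τ ((MonoidAlgebra.single g c) ⊗ₜ[F] s)
      = if hg : g ∈ H then c • τ ⟨g, hg⟩ s else 0 := by
  rw [indProjAux, TensorProduct.lift.tmul, LinearMap.comp_apply, LinearEquiv.coe_coe,
    MonoidAlgebra.coeffLinearEquiv_apply, MonoidAlgebra.coeff_single]
  erw [Finsupp.lsum_single]
  by_cases hg : g ∈ H
  · simp only [dif_pos hg, LinearMap.toSpanSingleton_apply, LinearMap.smul_apply]
  · simp only [dif_neg hg, LinearMap.toSpanSingleton_apply, LinearMap.smul_apply,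
      LinearMap.zero_apply, smul_zero]

theorem indProjAux_vanish : ∀ z ∈ indRel F H τ, indProjAux τ z = 0 := by
  have key : ∀ z ∈ indRel F H τ, ∀ a : MonoidAlgebra F G, indProjAux τ (a • z) = 0 := by
    intro z hz
    refine Submodule.span_induction ?_ ?_ ?_ ?_ hz
    · rintro x ⟨h, w, rfl⟩ a
      induction a using MonoidAlgebra.induction_linear with
      | zero => rw [zero_smul, map_zero]
      | add a b ha hb => rw [add_smul, map_add, ha, hb, add_zero]
      | single g c =>
        rw [smul_sub, TensorProduct.smul_tmul', TensorProduct.smul_tmul', map_sub]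
        have h1 : (MonoidAlgebra.single g c : MonoidAlgebra F G) •
            MonoidAlgebra.single (h : G) (1 : F) = MonoidAlgebra.single (g * (h : G)) c := by
          rw [smul_eq_mul, MonoidAlgebra.single_mul_single, mul_one]
        have h2 : (MonoidAlgebra.single g c : MonoidAlgebra F G) • (1 : MonoidAlgebra F G)
            = MonoidAlgebra.single g c := by
          rw [smul_eq_mul, mul_one]
        rw [h1, h2, indProjAux_single, indProjAux_single]
        by_cases hg : g ∈ H
        · have hgh : g * (h : G) ∈ H := H.mul_mem hg h.2
          rw [dif_pos hgh, dif_pos hg]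
          have : (⟨g * (h : G), hgh⟩ : ↥H) = ⟨g, hg⟩ * h := rfl
          rw [this, map_mul, Module.End.mul_apply, sub_self]
        · have hgh : ¬ g * (h : G) ∈ H := by
            intro hc
            apply hg
            have := H.mul_mem hc (H.inv_mem h.2)
            rwa [mul_inv_cancel_right] at this
          rw [dif_neg hgh, dif_neg hg, sub_zero]
    · intro a; rw [smul_zero, map_zero]
    · intro x y _ _ hx hy a; rw [smul_add, map_add, hx a, hy a, add_zero]
    · intro c x _ hx a
      rw [smul_smul]
      exact hx (a * c)
  intro z hz
  have := key z hz 1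
  rwa [one_smul] at this

/-- The `F`-linear projection `ind_H^G S → S`. -/
noncomputable def indProj : IndCar F H τ →ₗ[F] S :=
  indDesc τ (indProjAux τ) (indProjAux_vanish τ)

theorem indProj_indMk (g : G) (s : S) :
    indProj τ (indMk τ g s) = if hg : g ∈ H then τ ⟨g, hg⟩ s else 0 := by
  rw [indMk_apply, indProj, indDesc_mk, indProjAux_single]
  by_cases hg : g ∈ H
  · rw [dif_pos hg, dif_pos hg, one_smul]
  · rw [dif_neg hg, dif_neg hg]

theorem indMk_one_injective : Function.Injective (indMk τ 1) := by
  rw [← LinearMap.ker_eq_bot, eq_bot_iff]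
  intro s hs
  have h0 : indMk τ 1 s = 0 := hs
  have := indProj_indMk τ 1 s
  rw [h0, map_zero, dif_pos H.one_mem] at this
  have h1 : (⟨(1 : G), H.one_mem⟩ : ↥H) = 1 := rfl
  rw [h1, map_one] at this
  simp only [Module.End.one_apply] at this
  rw [Submodule.mem_bot, this]

theorem indMk_injective (g : G) : Function.Injective (indMk τ g) := by
  intro a b hab
  apply indMk_one_injective τ
  have h2 : IndRep F H τ g⁻¹ (indMk τ g a) = IndRep F H τ g⁻¹ (indMk τ g b) := by rw [hab]
  rwa [indRep_indMk, indRep_indMk, inv_mul_cancel] at h2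

/-- Lifting an intertwining map to a `G`-equivariant map on the induced module. -/
noncomputable def indLift (ρ : Representation F G V) (j : S →ₗ[F] V)
    (hj : ∀ (h : ↥H) (s : S), j (τ h s) = ρ (h : G) (j s)) : IndCar F H τ →ₗ[F] V :=
  indDesc τ (indLiftPre ρ j) (indLiftPre_vanish τ ρ j hj)

theorem indLift_indMk (ρ : Representation F G V) (j : S →ₗ[F] V)
    (hj : ∀ (h : ↥H) (s : S), j (τ h s) = ρ (h : G) (j s)) (g : G) (s : S) :
    indLift τ ρ j hj (indMk τ g s) = ρ g (j s) := by
  rw [indMk_apply, indLift, indDesc_mk, indLiftPre_single, one_smul]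

theorem indLift_equivariant (ρ : Representation F G V) (j : S →ₗ[F] V)
    (hj : ∀ (h : ↥H) (s : S), j (τ h s) = ρ (h : G) (j s)) (g : G) (z : IndCar F H τ) :
    indLift τ ρ j hj (IndRep F H τ g z) = ρ g (indLift τ ρ j hj z) := by
  have : (indLift τ ρ j hj) ∘ₗ (IndRep F H τ g : IndCar F H τ →ₗ[F] IndCar F H τ)
      = (ρ g : V →ₗ[F] V) ∘ₗ indLift τ ρ j hj := by
    apply ind_ext
    intro g' s
    show indLift τ ρ j hj (IndRep F H τ g (indMk τ g' s)) = ρ g (indLift τ ρ j hj (indMk τ g' s))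
    rw [indRep_indMk, indLift_indMk, indLift_indMk, map_mul, Module.End.mul_apply]
  exact congrArg (fun f => f z) this

/-- Induction is well defined on isomorphism classes. -/
theorem ind_repIso {S₂ : Type*} [AddCommGroup S₂] [Module F S₂] {τ₂ : Representation F ↥H S₂}
    (h : RepIso F τ τ₂) : RepIso F (IndRep F H τ) (IndRep F H τ₂) := by
  obtain ⟨e, he⟩ := h
  have hj : ∀ (h : ↥H) (s : S), (indMk τ₂ 1 ∘ₗ (e : S →ₗ[F] S₂)) (τ h s)
      = IndRep F H τ₂ (h : G) ((indMk τ₂ 1 ∘ₗ (e : S →ₗ[F] S₂)) s) := by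
    intro h s
    show indMk τ₂ 1 (e (τ h s)) = IndRep F H τ₂ (h : G) (indMk τ₂ 1 (e s))
    rw [he, ← indMk_hmul, indRep_indMk, mul_one]
  have hj' : ∀ (h : ↥H) (s : S₂), (indMk τ 1 ∘ₗ (e.symm : S₂ →ₗ[F] S)) (τ₂ h s)
      = IndRep F H τ (h : G) ((indMk τ 1 ∘ₗ (e.symm : S₂ →ₗ[F] S)) s) := by
    intro h s
    show indMk τ 1 (e.symm (τ₂ h s)) = IndRep F H τ (h : G) (indMk τ 1 (e.symm s))
    have : e.symm (τ₂ h s) = τ h (e.symm s) := by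
      apply e.injective
      rw [e.apply_symm_apply, he, e.apply_symm_apply]
    rw [this, ← indMk_hmul, indRep_indMk, mul_one]
  set L := indLift τ (IndRep F H τ₂) (indMk τ₂ 1 ∘ₗ (e : S →ₗ[F] S₂)) hj with hL
  set L' := indLift τ₂ (IndRep F H τ) (indMk τ 1 ∘ₗ (e.symm : S₂ →ₗ[F] S)) hj' with hL'
  have hLmk : ∀ (g : G) (s : S), L (indMk τ g s) = indMk τ₂ g (e s) := by
    intro g s
    rw [hL, indLift_indMk]
    show IndRep F H τ₂ g (indMk τ₂ 1 (e s)) = _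
    rw [indRep_indMk, mul_one]
  have hL'mk : ∀ (g : G) (s : S₂), L' (indMk τ₂ g s) = indMk τ g (e.symm s) := by
    intro g s
    rw [hL', indLift_indMk]
    show IndRep F H τ g (indMk τ 1 (e.symm s)) = _
    rw [indRep_indMk, mul_one]
  have h1 : L' ∘ₗ L = LinearMap.id := by
    apply ind_ext
    intro g s
    show L' (L (indMk τ g s)) = indMk τ g s
    rw [hLmk, hL'mk, e.symm_apply_apply]
  have h2 : L ∘ₗ L' = LinearMap.id := by
    apply ind_ext
    intro g s
    show L (L' (indMk τ₂ g s)) = indMk τ₂ g s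
    rw [hL'mk, hLmk, e.apply_symm_apply]
  refine ⟨LinearEquiv.ofLinear L L' h2 h1, fun g z => ?_⟩
  show L (IndRep F H τ g z) = IndRep F H τ₂ g (L z)
  rw [hL]
  exact indLift_equivariant τ (IndRep F H τ₂) _ hj g z

end CC

end CCInd

section CCConj

namespace CC

variable {F : Type*} [Field F]

theorem subRep_top_iso {G : Type*} [Monoid G] {V : Type*} [AddCommGroup V] [Module F V]
    (ρ : Representation F G V) (h : ∀ g : G, ∀ v ∈ (⊤ : Submodule F V), ρ g v ∈ ⊤) :
    RepIso F (subRep F ρ ⊤ h) ρ :=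
  ⟨LinearEquiv.ofTop ⊤ rfl, fun g v => rfl⟩

theorem repIso_ofEq {G : Type*} [Monoid G] {V : Type*} [AddCommGroup V] [Module F V]
    (ρ : Representation F G V) {p p' : Submodule F V} (h : p = p')
    (hp : ∀ g : G, ∀ v ∈ p, ρ g v ∈ p) (hp' : ∀ g : G, ∀ v ∈ p', ρ g v ∈ p') :
    RepIso F (subRep F ρ p hp) (subRep F ρ p' hp') :=
  ⟨LinearEquiv.ofEq p p' h, fun g v => rfl⟩

variable {G : Type*} [Group G] {N : Subgroup G} (hN : N.Normal)

theorem conjHom_comp (a b : G) :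
    (conjHom hN a).comp (conjHom hN b) = conjHom hN (a * b) := by
  ext n
  show a * (b * (n : G) * b⁻¹) * a⁻¹ = (a * b) * (n : G) * (a * b)⁻¹
  group

theorem conj_push {K : Type*} [Group K] {G' : Type*} [Group G']
    {V : Type*} [AddCommGroup V] [Module F V]
    (ρ' : Representation F G' V) (f : K →* G') (φ : K →* K) (t : G')
    (hcomm : ∀ n : K, t * f (φ n) = f n * t)
    (q : Submodule F V) (hq : ∀ n : K, ∀ v ∈ q, (ρ'.comp f) n v ∈ q) :
    ∃ hq' : ∀ n : K, ∀ v ∈ q.map (ρ' t), (ρ'.comp f) n v ∈ q.map (ρ' t),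
      RepIso F ((subRep F (ρ'.comp f) q hq).comp φ)
        (subRep F (ρ'.comp f) (q.map (ρ' t)) hq') := by
  have hqφ : ∀ n : K, ∀ v ∈ q, ((ρ'.comp f).comp φ) n v ∈ q := fun n v hv => hq (φ n) v hv
  have hf : ∀ n : K, ∀ v ∈ q,
      (ρ' t) (((ρ'.comp f).comp φ) n v) = (ρ'.comp f) n ((ρ' t) v) := by
    intro n v _
    show ρ' t (ρ' (f (φ n)) v) = ρ' (f n) (ρ' t v)
    rw [← Module.End.mul_apply, ← map_mul, hcomm n, map_mul, Module.End.mul_apply]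
  have hinj : ∀ v ∈ q, ρ' t v = 0 → v = 0 := by
    intro v _ hv
    have h2 : ρ' t⁻¹ (ρ' t v) = v := by
      rw [← Module.End.mul_apply, ← map_mul, inv_mul_cancel, map_one, Module.End.one_apply]
    rw [hv, map_zero] at h2
    exact h2.symm
  have hiso := pushIso (ρ' t : V →ₗ[F] V) hqφ hf hinj
  have heq : subRep F ((ρ'.comp f).comp φ) q hqφ = (subRep F (ρ'.comp f) q hq).comp φ := rfl
  rw [heq] at hiso
  exact ⟨pushInv _ hqφ hf, hiso⟩

end CC

end CCConj

section CCRel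

namespace CC

variable {F : Type*} [Field F] {G : Type*} [Monoid G] {V : Type*}
  [AddCommGroup V] [Module F V]

/-- Mapping a submodule of a subrepresentation into the ambient space. -/
theorem subsub (ρ : Representation F G V) (M : Submodule F V)
    (hM : ∀ g : G, ∀ v ∈ M, ρ g v ∈ M) (p' : Submodule F ↥M)
    (hp' : ∀ g : G, ∀ v ∈ p', subRep F ρ M hM g v ∈ p') :
    ∃ hmapinv : ∀ g : G, ∀ v ∈ p'.map M.subtype, ρ g v ∈ p'.map M.subtype,
      RepIso F (subRep F (subRep F ρ M hM) p' hp')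
        (subRep F ρ (p'.map M.subtype) hmapinv) := by
  have hf : ∀ g : G, ∀ v ∈ p', M.subtype (subRep F ρ M hM g v) = ρ g (M.subtype v) :=
    fun g v _ => rfl
  have hinj : ∀ v ∈ p', M.subtype v = 0 → v = 0 := by
    intro v _ hv
    exact Subtype.ext hv
  exact ⟨pushInv M.subtype hp' hf, pushIso M.subtype hp' hf hinj⟩

theorem irred_of_subInv (ρ : Representation F G V) (M : Submodule F V)
    (hM : ∀ g : G, ∀ v ∈ M, ρ g v ∈ M) (hMne : M ≠ ⊥)
    (hI : ∀ U : Submodule F V, U ≤ M → (∀ g : G, ∀ v ∈ U, ρ g v ∈ U) → U = ⊥ ∨ U = M) :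
    IsIrreducibleRep F (subRep F ρ M hM) := by
  refine ⟨Submodule.nontrivial_iff_ne_bot.mpr hMne, ?_⟩
  intro p' hp'
  have hUinv : ∀ g : G, ∀ v ∈ p'.map M.subtype, ρ g v ∈ p'.map M.subtype := by
    rintro g v ⟨w, hw, rfl⟩
    exact ⟨subRep F ρ M hM g w, hp' g w hw, rfl⟩
  have hle : p'.map M.subtype ≤ M := by
    rintro v ⟨w, -, rfl⟩
    exact w.2
  rcases hI _ hle hUinv with h | h
  · left
    rw [map_eq_bot_iff', Submodule.ker_subtype, le_bot_iff] at h
    exact h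
  · right
    have := congrArg (Submodule.comap M.subtype) h
    rwa [Submodule.comap_map_eq_of_injective (Submodule.injective_subtype M),
      Submodule.comap_subtype_self] at this

/-- Relative version of `exists_irred_le`: inside the sum of the family. -/
theorem exists_irred_le_rel {ρ : Representation F G V} {S : Set (Submodule F V)}
    (hS : ∀ p ∈ S, ∃ hp : ∀ g : G, ∀ v ∈ p, ρ g v ∈ p,
      p = ⊥ ∨ IsIrreducibleRep F (subRep F ρ p hp))
    (U : Submodule F V) (hU : ∀ g : G, ∀ v ∈ U, ρ g v ∈ U)
    (hUle : U ≤ sSup S) (hUne : U ≠ ⊥) :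
    ∃ (q : Submodule F V) (hq : ∀ g : G, ∀ v ∈ q, ρ g v ∈ q), q ≤ U ∧
      IsIrreducibleRep F (subRep F ρ q hq) ∧
      ∃ p ∈ S, ∃ hp : ∀ g : G, ∀ v ∈ p, ρ g v ∈ p,
        RepIso F (subRep F ρ p hp) (subRep F ρ q hq) := by
  set M := sSup S with hMdef
  have hMinv : ∀ g : G, ∀ v ∈ M, ρ g v ∈ M := inv_sSup (fun p hp => (hS p hp).choose)
  set ρM := subRep F ρ M hMinv with hρM
  -- transfer the family into M
  set S' : Set (Submodule F ↥M) := (fun p => p.comap M.subtype) '' S with hS'def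
  have hmapcomap : ∀ p ∈ S, (p.comap M.subtype).map M.subtype = p := by
    intro p hp
    rw [Submodule.map_comap_subtype, inf_eq_right.mpr (le_sSup hp : p ≤ M)]
  have hS' : ∀ p' ∈ S', ∃ hp' : ∀ g : G, ∀ v ∈ p', ρM g v ∈ p',
      p' = ⊥ ∨ IsIrreducibleRep F (subRep F ρM p' hp') := by
    rintro p' ⟨p, hpS, rfl⟩
    obtain ⟨hpinv, hpalt⟩ := hS p hpS
    have hinv' : ∀ g : G, ∀ v ∈ p.comap M.subtype, ρM g v ∈ p.comap M.subtype := by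
      intro g v hv
      exact hpinv g (v : V) hv
    refine ⟨hinv', ?_⟩
    rcases hpalt with rfl | hpirr
    · left
      rw [eq_bot_iff]
      intro v hv
      have : (v : V) ∈ (⊥ : Submodule F V) := hv
      rw [Submodule.mem_bot] at this
      rw [Submodule.mem_bot]
      exact Subtype.ext this
    · right
      obtain ⟨hmapinv, hiso⟩ := subsub ρ M hMinv (p.comap M.subtype) hinv'
      have hiso2 := repIso_trans hiso (repIso_ofEq ρ (hmapcomap p hpS) hmapinv hpinv)
      exact repIso_irred (repIso_symm hiso2) hpirr
  have hsup' : sSup S' = ⊤ := by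
    apply Submodule.map_injective_of_injective (Submodule.injective_subtype M)
    have h1 : (sSup S').map M.subtype = sSup ((fun p' : Submodule F ↥M => p'.map M.subtype) '' S') := by
      conv_lhs => rw [sSup_eq_iSup']
      rw [Submodule.map_iSup, sSup_image, iSup_subtype'']
    rw [h1, Submodule.map_top, Submodule.range_subtype]
    have h2 : (fun p' : Submodule F ↥M => p'.map M.subtype) '' S' = S := by
      rw [hS'def, ← Set.image_comp]
      apply Set.EqOn.image_eq_self
      intro p hp
      exact hmapcomap p hp
    rw [h2]
  have hU'inv : ∀ g : G, ∀ v ∈ U.comap M.subtype, ρM g v ∈ U.comap M.subtype := by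
    intro g v hv
    exact hU g (v : V) hv
  have hU'ne : U.comap M.subtype ≠ ⊥ := by
    intro h
    apply hUne
    have := congrArg (Submodule.map M.subtype) h
    rwa [Submodule.map_comap_subtype, inf_eq_right.mpr hUle, Submodule.map_bot] at this
  obtain ⟨q', hq', hq'le, hq'irr, p', hp'S', hp'inv, hp'iso⟩ :=
    exists_irred_le hS' hsup' (U.comap M.subtype) hU'inv hU'ne
  -- push everything down
  obtain ⟨hqinv, hqiso⟩ := subsub ρ M hMinv q' hq'
  refine ⟨q'.map M.subtype, hqinv, ?_, repIso_irred hqiso hq'irr, ?_⟩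
  · intro v hv
    obtain ⟨w, hw, rfl⟩ := hv
    exact hq'le hw
  · obtain ⟨p, hpS, rfl⟩ := hp'S'
    obtain ⟨hpinv, -⟩ := hS p hpS
    obtain ⟨hcminv, hcmiso⟩ := subsub ρ M hMinv (p.comap M.subtype) hp'inv
    refine ⟨p, hpS, hpinv, ?_⟩
    exact repIso_trans (repIso_symm (repIso_trans hcmiso
      (repIso_ofEq ρ (hmapcomap p hpS) hcminv hpinv))) (repIso_trans hp'iso hqiso)

end CC

end CCRel

section CCMain

namespace CC

variable {F : Type*} [Field F] {G : Type*} [Group G] {N : Subgroup G} (hN : N.Normal)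
  {W : Type*} [AddCommGroup W] [Module F W] (σ : Representation F ↥N W)
  (hσ : IsIrreducibleRep F σ) {T : Subgroup G} (hNT : N ≤ T)
  (hT : ∀ g : G, g ∈ T ↔ RepIso F (σ.comp (conjHom hN g)) σ)

include hσ in
theorem irred_comp_conj (y : G) : IsIrreducibleRep F (σ.comp (conjHom hN y)) := by
  refine ⟨hσ.1, fun p hp => hσ.2 p ?_⟩
  intro n v hv
  have h2 := hp (conjHom hN y⁻¹ n) v hv
  have h3 : conjHom hN y (conjHom hN y⁻¹ n) = n := by
    ext
    show y * (y⁻¹ * (n : G) * y⁻¹⁻¹) * y⁻¹ = (n : G)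
    group
  show σ n v ∈ p
  rw [← h3]
  exact h2

include hN hσ hT in
theorem part1 (S : Type*) [AddCommGroup S] [Module F S] (τ : Representation F ↥T S)
    (hτ : IsIrreducibleRep F τ) (hlies : LiesOver F (τ.comp (Subgroup.inclusion hNT)) σ) :
    IsIrreducibleRep F (IndRep F T τ) ∧
    LiesOver F ((IndRep F T τ).comp N.subtype) σ ∧
    ∃ hinv : ∀ t : ↥T, ∀ v ∈ homComponent F ((IndRep F T τ).comp N.subtype) σ,
        ((IndRep F T τ).comp T.subtype) t v ∈
          homComponent F ((IndRep F T τ).comp N.subtype) σ,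
      RepIso F
        (subRep F ((IndRep F T τ).comp T.subtype)
          (homComponent F ((IndRep F T τ).comp N.subtype) σ) hinv) τ := by
  obtain ⟨q₀, hq₀, hiso₀⟩ := hlies
  have hirr₀ : IsIrreducibleRep F (subRep F (τ.comp (Subgroup.inclusion hNT)) q₀ hq₀) :=
    repIso_irred (repIso_symm hiso₀) hσ
  -- Step 1 : Clifford decomposition of τ restricted to N
  have hAinv : ∀ t' : ↥T, ∀ v ∈ ⨆ t : ↥T, q₀.map (τ t), τ t' v ∈ ⨆ t : ↥T, q₀.map (τ t) := by
    intro t' v hv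
    refine Submodule.iSup_induction (motive := fun v => τ t' v ∈ ⨆ t : ↥T, q₀.map (τ t)) _ hv
      ?_ ?_ ?_
    · rintro t v ⟨w, hw, rfl⟩
      have h1 : τ t' (τ t w) = τ (t' * t) w := by rw [map_mul, Module.End.mul_apply]
      rw [h1]
      exact le_iSup (fun t : ↥T => q₀.map (τ t)) (t' * t) ⟨w, hw, rfl⟩
    · show τ t' 0 ∈ _
      rw [map_zero]; exact zero_mem _
    · intro x y hx hy
      show τ t' (x + y) ∈ _
      rw [map_add]; exact add_mem hx hy
  have hq₀eq : q₀.map (τ 1) = q₀ := by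
    rw [map_one, Module.End.one_eq_id, Submodule.map_id]
  have htop : (⨆ t : ↥T, q₀.map (τ t)) = ⊤ := by
    rcases hτ.2 _ hAinv with h | h
    · exfalso
      apply ne_bot_of_irred hirr₀
      have h2 : q₀.map (τ 1) ≤ ⨆ t : ↥T, q₀.map (τ t) :=
        le_iSup (fun t : ↥T => q₀.map (τ t)) 1
      rw [hq₀eq, h, le_bot_iff] at h2
      exact h2
    · exact h
  -- Step 2 : each translate of q₀ is an invariant irreducible isomorphic to σ
  have hstep2 : ∀ t : ↥T, ∃ hqt : ∀ n : ↥N, ∀ v ∈ q₀.map (τ t),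
      (τ.comp (Subgroup.inclusion hNT)) n v ∈ q₀.map (τ t),
      IsIrreducibleRep F (subRep F (τ.comp (Subgroup.inclusion hNT)) (q₀.map (τ t)) hqt) ∧
      RepIso F (subRep F (τ.comp (Subgroup.inclusion hNT)) (q₀.map (τ t)) hqt) σ := by
    intro t
    have hcomm : ∀ n : ↥N,
        t * (Subgroup.inclusion hNT) (conjHom hN ((t : G))⁻¹ n) = (Subgroup.inclusion hNT) n * t := by
      intro n
      apply Subtype.ext
      show (t : G) * (((t : G))⁻¹ * (n : G) * (((t : G))⁻¹)⁻¹) = (n : G) * (t : G)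
      group
    obtain ⟨hqt, hisot⟩ := conj_push (ρ' := τ) (Subgroup.inclusion hNT)
      (conjHom hN ((t : G))⁻¹) t hcomm q₀ hq₀
    have hiso1 : RepIso F
        ((subRep F (τ.comp (Subgroup.inclusion hNT)) q₀ hq₀).comp (conjHom hN ((t : G))⁻¹))
        (σ.comp (conjHom hN ((t : G))⁻¹)) := repIso_comp hiso₀ _
    have hiso2 : RepIso F (σ.comp (conjHom hN ((t : G))⁻¹)) σ := (hT _).mp (T.inv_mem t.2)
    have hfull := repIso_trans (repIso_symm hisot) (repIso_trans hiso1 hiso2)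
    exact ⟨hqt, repIso_irred (repIso_symm hfull) hσ, hfull⟩
  choose hqt hfacts using hstep2
  -- Step 3 : the members of the generating family of the induced module
  have hstep3 : ∀ (g : G) (t : ↥T), ∃ hm : ∀ n : ↥N,
      ∀ v ∈ (q₀.map (τ t)).map (indMk τ g),
        ((IndRep F T τ).comp N.subtype) n v ∈ (q₀.map (τ t)).map (indMk τ g),
      IsIrreducibleRep F (subRep F ((IndRep F T τ).comp N.subtype)
        ((q₀.map (τ t)).map (indMk τ g)) hm) ∧
      RepIso F (subRep F ((IndRep F T τ).comp N.subtype)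
        ((q₀.map (τ t)).map (indMk τ g)) hm) (σ.comp (conjHom hN g⁻¹)) := by
    intro g t
    have hqπ : ∀ n : ↥N, ∀ v ∈ q₀.map (τ t),
        ((τ.comp (Subgroup.inclusion hNT)).comp (conjHom hN g⁻¹)) n v ∈ q₀.map (τ t) :=
      fun n v hv => hqt t (conjHom hN g⁻¹ n) v hv
    have hf : ∀ n : ↥N, ∀ v ∈ q₀.map (τ t),
        (indMk τ g) (((τ.comp (Subgroup.inclusion hNT)).comp (conjHom hN g⁻¹)) n v)
          = ((IndRep F T τ).comp N.subtype) n ((indMk τ g) v) := by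
      intro n v _
      show indMk τ g (τ ((Subgroup.inclusion hNT) (conjHom hN g⁻¹ n)) v)
        = IndRep F T τ (n : G) (indMk τ g v)
      have hg : ((n : G) * g : G) = g * ((Subgroup.inclusion hNT) (conjHom hN g⁻¹ n) : G) := by
        show (n : G) * g = g * (g⁻¹ * (n : G) * g⁻¹⁻¹)
        group
      rw [indRep_indMk, hg, indMk_rel]
    have hinj : ∀ v ∈ q₀.map (τ t), indMk τ g v = 0 → v = 0 := by
      intro v _ hv
      apply indMk_injective τ g
      rw [hv, map_zero]
    have hiso3 := pushIso (indMk τ g) hqπ hf hinj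
    have heq : subRep F ((τ.comp (Subgroup.inclusion hNT)).comp (conjHom hN g⁻¹))
        (q₀.map (τ t)) hqπ
        = (subRep F (τ.comp (Subgroup.inclusion hNT)) (q₀.map (τ t)) (hqt t)).comp
          (conjHom hN g⁻¹) := rfl
    rw [heq] at hiso3
    have hfull := repIso_trans (repIso_symm hiso3)
      (repIso_comp (hfacts t).2 (conjHom hN g⁻¹))
    exact ⟨pushInv _ hqπ hf, repIso_irred (repIso_symm hfull) (irred_comp_conj hN σ hσ g⁻¹),
      hfull⟩
  choose hm hmfacts using hstep3
  -- Step 4 : the family generates the induced module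
  have hSfam : ∀ p ∈ {p : Submodule F (IndCar F T τ) |
      ∃ (g : G) (t : ↥T), p = (q₀.map (τ t)).map (indMk τ g)},
      ∃ hp : ∀ n : ↥N, ∀ v ∈ p, ((IndRep F T τ).comp N.subtype) n v ∈ p,
        p = ⊥ ∨ IsIrreducibleRep F (subRep F ((IndRep F T τ).comp N.subtype) p hp) := by
    rintro p ⟨g, t, rfl⟩
    exact ⟨hm g t, Or.inr (hmfacts g t).1⟩
  have hsup : sSup {p : Submodule F (IndCar F T τ) |
      ∃ (g : G) (t : ↥T), p = (q₀.map (τ t)).map (indMk τ g)} = ⊤ := by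
    rw [eq_top_iff, ← indMk_span τ]
    apply iSup_le
    intro g
    rw [LinearMap.range_eq_map, ← htop, Submodule.map_iSup]
    apply iSup_le
    intro t
    exact le_sSup ⟨g, t, rfl⟩
  -- Step 5 : the homogeneous component is the image of `S` at the identity
  have hhc := homComponent_eq (σ := σ) hSfam hsup
  have hR1 : sSup {p : Submodule F (IndCar F T τ) |
      p ∈ {p : Submodule F (IndCar F T τ) |
        ∃ (g : G) (t : ↥T), p = (q₀.map (τ t)).map (indMk τ g)} ∧
      ∃ hp : ∀ n : ↥N, ∀ v ∈ p, ((IndRep F T τ).comp N.subtype) n v ∈ p,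
        IsIrreducibleRep F (subRep F ((IndRep F T τ).comp N.subtype) p hp) ∧
        RepIso F (subRep F ((IndRep F T τ).comp N.subtype) p hp) σ}
      = (⊤ : Submodule F S).map (indMk τ 1) := by
    apply le_antisymm
    · apply sSup_le
      rintro p ⟨⟨g, t, rfl⟩, hp, -, hpiso⟩
      have hgT : g ∈ T := by
        rw [← T.inv_mem_iff]
        exact (hT g⁻¹).mpr (repIso_trans (repIso_symm (hmfacts g t).2) hpiso)
      rintro v ⟨w, -, rfl⟩
      refine ⟨τ ⟨g, hgT⟩ w, trivial, ?_⟩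
      exact (indMk_hmul τ ⟨g, hgT⟩ w).symm
    · have h1 : (⊤ : Submodule F S).map (indMk τ 1) =
          ⨆ t : ↥T, (q₀.map (τ t)).map (indMk τ 1) := by
        rw [← htop, Submodule.map_iSup]
      rw [h1]
      apply iSup_le
      intro t
      have hone : RepIso F (σ.comp (conjHom hN (1 : G)⁻¹)) σ := by
        apply (hT _).mp
        rw [inv_one]
        exact T.one_mem
      exact le_sSup ⟨⟨1, t, rfl⟩, hm 1 t, (hmfacts 1 t).1,
        repIso_trans (hmfacts 1 t).2 hone⟩
  have hhcR : homComponent F ((IndRep F T τ).comp N.subtype) σ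
      = (⊤ : Submodule F S).map (indMk τ 1) := hhc.trans hR1
  -- Step 6 : invariance of the homogeneous component under T
  have hR₁T : ∀ t : ↥T, ∀ v ∈ (⊤ : Submodule F S).map (indMk τ 1),
      ((IndRep F T τ).comp T.subtype) t v ∈ (⊤ : Submodule F S).map (indMk τ 1) := by
    rintro t v ⟨s, -, rfl⟩
    refine ⟨τ t s, trivial, ?_⟩
    show indMk τ 1 (τ t s) = IndRep F T τ (t : G) (indMk τ 1 s)
    rw [← indMk_hmul, indRep_indMk, mul_one]
  have hinv : ∀ t : ↥T, ∀ v ∈ homComponent F ((IndRep F T τ).comp N.subtype) σ,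
      ((IndRep F T τ).comp T.subtype) t v ∈
        homComponent F ((IndRep F T τ).comp N.subtype) σ := by
    intro t v hv
    rw [hhcR] at hv ⊢
    exact hR₁T t v hv
  -- Step 7 : the homogeneous component is isomorphic to τ as a T-representation
  have htriv : ∀ t : ↥T, ∀ s ∈ (⊤ : Submodule F S), τ t s ∈ (⊤ : Submodule F S) :=
    fun _ _ _ => trivial
  have hf7 : ∀ t : ↥T, ∀ s ∈ (⊤ : Submodule F S),
      (indMk τ 1) (τ t s) = ((IndRep F T τ).comp T.subtype) t ((indMk τ 1) s) := by
    intro t s _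
    show indMk τ 1 (τ t s) = IndRep F T τ (t : G) (indMk τ 1 s)
    rw [← indMk_hmul, indRep_indMk, mul_one]
  have hinj7 : ∀ s ∈ (⊤ : Submodule F S), indMk τ 1 s = 0 → s = 0 := by
    intro s _ h
    apply indMk_one_injective τ
    rw [h, map_zero]
  have h7 := pushIso (indMk τ 1) htriv hf7 hinj7
  have hR₁iso : RepIso F (subRep F ((IndRep F T τ).comp T.subtype)
      ((⊤ : Submodule F S).map (indMk τ 1)) hR₁T) τ :=
    repIso_trans (repIso_symm h7) (subRep_top_iso τ htriv)
  -- Step 8 : nontriviality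
  have hnt : Nontrivial (IndCar F T τ) := by
    obtain ⟨s0, s1, hs⟩ := hτ.1
    exact ⟨indMk τ 1 s0, indMk τ 1 s1, fun h => hs (indMk_one_injective τ h)⟩
  -- conclusion
  refine ⟨⟨hnt, ?_⟩, ?_, hinv,
    repIso_trans (repIso_ofEq _ hhcR hinv hR₁T) hR₁iso⟩
  · -- irreducibility of the induced representation
    intro U hU
    by_cases hUb : U = ⊥
    · exact Or.inl hUb
    right
    have hUN : ∀ n : ↥N, ∀ v ∈ U, ((IndRep F T τ).comp N.subtype) n v ∈ U :=
      fun n v hv => hU (n : G) v hv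
    obtain ⟨q, hq, hqle, hqirr, p, hp𝒮, hpinv, hpiso⟩ :=
      exists_irred_le hSfam hsup U hUN hUb
    obtain ⟨g, t, rfl⟩ := hp𝒮
    have hqσ : RepIso F (subRep F ((IndRep F T τ).comp N.subtype) q hq)
        (σ.comp (conjHom hN g⁻¹)) :=
      repIso_trans (repIso_symm hpiso) (hmfacts g t).2
    have hcomm : ∀ n : ↥N,
        g⁻¹ * N.subtype (conjHom hN g n) = N.subtype n * g⁻¹ := by
      intro n
      show g⁻¹ * (g * (n : G) * g⁻¹) = (n : G) * g⁻¹
      group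
    obtain ⟨hY, hYiso⟩ := conj_push (IndRep F T τ) N.subtype (conjHom hN g) g⁻¹ hcomm q hq
    have h1 : RepIso F ((σ.comp (conjHom hN g⁻¹)).comp (conjHom hN g)) σ := by
      rw [MonoidHom.comp_assoc, conjHom_comp, inv_mul_cancel]
      exact (hT 1).mp T.one_mem
    have hYσ : RepIso F (subRep F ((IndRep F T τ).comp N.subtype)
        (q.map (IndRep F T τ g⁻¹)) hY) σ :=
      repIso_trans (repIso_symm hYiso)
        (repIso_trans (repIso_comp hqσ (conjHom hN g)) h1)
    have hYirr := repIso_irred (repIso_symm hYσ) hσ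
    have hYle : q.map (IndRep F T τ g⁻¹) ≤ U := by
      rintro v ⟨w, hw, rfl⟩
      exact hU g⁻¹ w (hqle hw)
    have hYne : q.map (IndRep F T τ g⁻¹) ≠ ⊥ := ne_bot_of_irred hYirr
    have hYhc : q.map (IndRep F T τ g⁻¹) ≤
        homComponent F ((IndRep F T τ).comp N.subtype) σ := le_homComponent hY hYirr hYσ
    have hUR1 : (⊤ : Submodule F S).map (indMk τ 1) ≤ U := by
      have hinter : ∀ t : ↥T, ∀ v ∈ U ⊓ (⊤ : Submodule F S).map (indMk τ 1),
          ((IndRep F T τ).comp T.subtype) t v ∈ U ⊓ (⊤ : Submodule F S).map (indMk τ 1) :=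
        fun t v hv => ⟨hU (t : G) v hv.1, hR₁T t v hv.2⟩
      rcases subInvEq (repIso_irred (repIso_symm hR₁iso) hτ)
          (U ⊓ (⊤ : Submodule F S).map (indMk τ 1)) inf_le_right hinter with h | h
      · exfalso
        apply hYne
        rw [eq_bot_iff, ← h]
        exact le_inf hYle (hYhc.trans (le_of_eq hhcR))
      · rw [← h]
        exact inf_le_left
    rw [eq_top_iff, ← indMk_span τ]
    apply iSup_le
    intro g'
    rintro v ⟨s, rfl⟩
    have h2 : indMk τ g' s = IndRep F T τ g' (indMk τ 1 s) := by
      rw [indRep_indMk, mul_one]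
    rw [h2]
    exact hU g' _ (hUR1 ⟨s, trivial, rfl⟩)
  · -- the induced representation lies over σ
    have hone : RepIso F (σ.comp (conjHom hN (1 : G)⁻¹)) σ := by
      apply (hT _).mp
      rw [inv_one]
      exact T.one_mem
    exact ⟨(q₀.map (τ 1)).map (indMk τ 1), hm 1 1,
      repIso_trans (hmfacts 1 1).2 hone⟩

include hN hσ hT in
theorem part2 (V : Type*) [AddCommGroup V] [Module F V] (ρV : Representation F G V)
    (hV : IsIrreducibleRep F ρV) (hlies : LiesOver F (ρV.comp N.subtype) σ) :
    ∃ hinv : ∀ t : ↥T, ∀ v ∈ homComponent F (ρV.comp N.subtype) σ,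
        (ρV.comp T.subtype) t v ∈ homComponent F (ρV.comp N.subtype) σ,
      IsIrreducibleRep F
        (subRep F (ρV.comp T.subtype) (homComponent F (ρV.comp N.subtype) σ) hinv) ∧
      LiesOver F
        ((subRep F (ρV.comp T.subtype) (homComponent F (ρV.comp N.subtype) σ)
          hinv).comp (Subgroup.inclusion hNT)) σ ∧
      RepIso F
        (IndRep F T
          (subRep F (ρV.comp T.subtype) (homComponent F (ρV.comp N.subtype) σ) hinv))
        ρV := by
  obtain ⟨q₀, hq₀, hiso₀⟩ := hlies
  have hirr₀ : IsIrreducibleRep F (subRep F (ρV.comp N.subtype) q₀ hq₀) :=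
    repIso_irred (repIso_symm hiso₀) hσ
  have hq₀ne : q₀ ≠ ⊥ := ne_bot_of_irred hirr₀
  -- translates of an invariant irreducible isomorphic to σ
  have htrans : ∀ (q : Submodule F V) (hq : ∀ n : ↥N, ∀ v ∈ q, (ρV.comp N.subtype) n v ∈ q),
      RepIso F (subRep F (ρV.comp N.subtype) q hq) σ → ∀ g : G,
      ∃ hmg : ∀ n : ↥N, ∀ v ∈ q.map (ρV g), (ρV.comp N.subtype) n v ∈ q.map (ρV g),
        RepIso F (subRep F (ρV.comp N.subtype) (q.map (ρV g)) hmg)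
          (σ.comp (conjHom hN g⁻¹)) := by
    intro q hq hqiso g
    have hcomm : ∀ n : ↥N, g * N.subtype (conjHom hN g⁻¹ n) = N.subtype n * g := by
      intro n
      show g * (g⁻¹ * (n : G) * g⁻¹⁻¹) = (n : G) * g
      group
    obtain ⟨hmg, hiso⟩ := conj_push ρV N.subtype (conjHom hN g⁻¹) g hcomm q hq
    exact ⟨hmg, repIso_trans (repIso_symm hiso) (repIso_comp hqiso (conjHom hN g⁻¹))⟩
  -- translates of a nonzero invariant submodule sum to ⊤
  have hsumtop : ∀ q : Submodule F V, q ≠ ⊥ →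
      sSup {p : Submodule F V | ∃ g : G, p = q.map (ρV g)} = ⊤ := by
    intro q hqne
    have hBinv : ∀ g' : G, ∀ v ∈ sSup {p : Submodule F V | ∃ g : G, p = q.map (ρV g)},
        ρV g' v ∈ sSup {p : Submodule F V | ∃ g : G, p = q.map (ρV g)} := by
      intro g' v hv
      rw [sSup_eq_iSup'] at hv ⊢
      refine Submodule.iSup_induction
        (motive := fun v => ρV g' v ∈ ⨆ p : {p : Submodule F V | ∃ g : G, p = q.map (ρV g)},
          (p : Submodule F V)) _ hv ?_ ?_ ?_
      · rintro ⟨p, g, rfl⟩ v ⟨w, hw, rfl⟩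
        have h1 : ρV g' (ρV g w) = ρV (g' * g) w := by rw [map_mul, Module.End.mul_apply]
        rw [h1]
        exact le_iSup (fun p : {p : Submodule F V | ∃ g : G, p = q.map (ρV g)} =>
          (p : Submodule F V)) ⟨q.map (ρV (g' * g)), g' * g, rfl⟩ ⟨w, hw, rfl⟩
      · show ρV g' 0 ∈ _
        rw [map_zero]; exact zero_mem _
      · intro x y hx hy
        show ρV g' (x + y) ∈ _
        rw [map_add]; exact add_mem hx hy
    rcases hV.2 _ hBinv with h | h
    · exfalso
      apply hqne
      have h2 : q.map (ρV 1) ≤ sSup {p : Submodule F V | ∃ g : G, p = q.map (ρV g)} :=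
        le_sSup ⟨1, rfl⟩
      rw [map_one, Module.End.one_eq_id, Submodule.map_id, h, le_bot_iff] at h2
      exact h2
    · exact h
  choose hmg hmfacts using htrans q₀ hq₀ hiso₀
  have hSfam : ∀ p ∈ {p : Submodule F V | ∃ g : G, p = q₀.map (ρV g)},
      ∃ hp : ∀ n : ↥N, ∀ v ∈ p, (ρV.comp N.subtype) n v ∈ p,
        p = ⊥ ∨ IsIrreducibleRep F (subRep F (ρV.comp N.subtype) p hp) := by
    rintro p ⟨g, rfl⟩
    exact ⟨hmg g, Or.inr (repIso_irred (repIso_symm (hmfacts g))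
      (irred_comp_conj hN σ hσ g⁻¹))⟩
  have hhc := homComponent_eq (σ := σ) hSfam (hsumtop q₀ hq₀ne)
  set 𝒜 : Set (Submodule F V) := {p : Submodule F V |
    p ∈ {p : Submodule F V | ∃ g : G, p = q₀.map (ρV g)} ∧
    ∃ hp : ∀ n : ↥N, ∀ v ∈ p, (ρV.comp N.subtype) n v ∈ p,
      IsIrreducibleRep F (subRep F (ρV.comp N.subtype) p hp) ∧
      RepIso F (subRep F (ρV.comp N.subtype) p hp) σ} with h𝒜
  -- T-invariance of the homogeneous component
  have hinv : ∀ t : ↥T, ∀ v ∈ homComponent F (ρV.comp N.subtype) σ,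
      (ρV.comp T.subtype) t v ∈ homComponent F (ρV.comp N.subtype) σ := by
    intro t v hv
    rw [hhc] at hv ⊢
    refine linear_sSup_closed (f := (ρV ((t : G)) : V →ₗ[F] V)) ?_ v hv
    rintro p ⟨⟨g, rfl⟩, hp, -, hpiso⟩
    have hgT : g ∈ T := by
      rw [← T.inv_mem_iff]
      exact (hT g⁻¹).mpr (repIso_trans (repIso_symm (hmfacts g)) hpiso)
    rintro v' ⟨w, hw, rfl⟩
    have h1 : ρV (t : G) (ρV g w) = ρV ((t : G) * g) w := by
      rw [map_mul, Module.End.mul_apply]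
    show ρV (t : G) (ρV g w) ∈ _
    rw [h1]
    have htgT : (t : G) * g ∈ T := T.mul_mem t.2 hgT
    have hiso2 : RepIso F (subRep F (ρV.comp N.subtype) (q₀.map (ρV ((t : G) * g)))
        (hmg ((t : G) * g))) σ :=
      repIso_trans (hmfacts ((t : G) * g)) ((hT _).mp (T.inv_mem htgT))
    have hmem : q₀.map (ρV ((t : G) * g)) ∈ 𝒜 :=
      ⟨⟨(t : G) * g, rfl⟩, hmg _, repIso_irred (repIso_symm hiso2) hσ, hiso2⟩
    exact le_sSup hmem ⟨w, hw, rfl⟩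
  have hq₀M : q₀ ≤ homComponent F (ρV.comp N.subtype) σ := le_homComponent hq₀ hirr₀ hiso₀
  have hMne : homComponent F (ρV.comp N.subtype) σ ≠ ⊥ := by
    intro h
    apply hq₀ne
    rw [← le_bot_iff, ← h]
    exact hq₀M
  have hMN : ∀ n : ↥N, ∀ v ∈ homComponent F (ρV.comp N.subtype) σ,
      (ρV.comp N.subtype) n v ∈ homComponent F (ρV.comp N.subtype) σ := inv_homComponent
  -- irreducibility of the homogeneous component as a T-representation
  have hirrM : IsIrreducibleRep F
      (subRep F (ρV.comp T.subtype) (homComponent F (ρV.comp N.subtype) σ) hinv) := by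
    apply irred_of_subInv _ _ hinv hMne
    intro U hUle hUT
    by_cases hUb : U = ⊥
    · exact Or.inl hUb
    right
    have hUN : ∀ n : ↥N, ∀ v ∈ U, (ρV.comp N.subtype) n v ∈ U :=
      fun n v hv => hUT ⟨(n : G), hNT n.2⟩ v hv
    have h𝒜fam : ∀ p ∈ 𝒜, ∃ hp : ∀ n : ↥N, ∀ v ∈ p, (ρV.comp N.subtype) n v ∈ p,
        p = ⊥ ∨ IsIrreducibleRep F (subRep F (ρV.comp N.subtype) p hp) := by
      rintro p ⟨-, hp, hpirr, -⟩
      exact ⟨hp, Or.inr hpirr⟩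
    obtain ⟨Y, hY, hYle, hYirr, p, hp𝒜, hpinv, hpiso⟩ :=
      exists_irred_le_rel h𝒜fam U hUN (le_of_le_of_eq hUle hhc) hUb
    obtain ⟨-, hp', -, hpiso2⟩ := hp𝒜
    have hYσ : RepIso F (subRep F (ρV.comp N.subtype) Y hY) σ :=
      repIso_trans (repIso_symm hpiso) hpiso2
    have hYne : Y ≠ ⊥ := ne_bot_of_irred hYirr
    choose hmgY hmfactsY using htrans Y hY hYσ
    have hYfam : ∀ p ∈ {p : Submodule F V | ∃ g : G, p = Y.map (ρV g)},
        ∃ hp : ∀ n : ↥N, ∀ v ∈ p, (ρV.comp N.subtype) n v ∈ p,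
          p = ⊥ ∨ IsIrreducibleRep F (subRep F (ρV.comp N.subtype) p hp) := by
      rintro p ⟨g, rfl⟩
      exact ⟨hmgY g, Or.inr (repIso_irred (repIso_symm (hmfactsY g))
        (irred_comp_conj hN σ hσ g⁻¹))⟩
    have hhcY := homComponent_eq (σ := σ) hYfam (hsumtop Y hYne)
    refine le_antisymm hUle ?_
    rw [hhcY]
    apply sSup_le
    rintro p' ⟨⟨g, rfl⟩, hp'', -, hp'iso⟩
    have hgT : g ∈ T := by
      rw [← T.inv_mem_iff]
      exact (hT g⁻¹).mpr (repIso_trans (repIso_symm (hmfactsY g)) hp'iso)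
    rintro v ⟨w, hw, rfl⟩
    exact hUT ⟨g, hgT⟩ w (hYle hw)
  -- the homogeneous component lies over σ
  have heqrep : (subRep F (ρV.comp T.subtype) (homComponent F (ρV.comp N.subtype) σ)
      hinv).comp (Subgroup.inclusion hNT)
      = subRep F (ρV.comp N.subtype) (homComponent F (ρV.comp N.subtype) σ) hMN := rfl
  have hliesM : LiesOver F ((subRep F (ρV.comp T.subtype)
      (homComponent F (ρV.comp N.subtype) σ) hinv).comp (Subgroup.inclusion hNT)) σ := by
    rw [heqrep]
    have hq₀Minv : ∀ n : ↥N, ∀ v ∈ q₀.comap (homComponent F (ρV.comp N.subtype) σ).subtype,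
        subRep F (ρV.comp N.subtype) (homComponent F (ρV.comp N.subtype) σ) hMN n v ∈
          q₀.comap (homComponent F (ρV.comp N.subtype) σ).subtype := by
      intro n v hv
      exact hq₀ n (v : V) hv
    obtain ⟨hmapinv, hiso⟩ := subsub (ρV.comp N.subtype)
      (homComponent F (ρV.comp N.subtype) σ) hMN _ hq₀Minv
    have hmapeq : (q₀.comap (homComponent F (ρV.comp N.subtype) σ).subtype).map
        (homComponent F (ρV.comp N.subtype) σ).subtype = q₀ := by
      rw [Submodule.map_comap_subtype, inf_eq_right.mpr hq₀M]
    exact ⟨_, hq₀Minv, repIso_trans hiso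
      (repIso_trans (repIso_ofEq _ hmapeq hmapinv hq₀) hiso₀)⟩
  -- the induced module of the homogeneous component is isomorphic to V
  have hj : ∀ (t : ↥T) (m : ↥(homComponent F (ρV.comp N.subtype) σ)),
      (homComponent F (ρV.comp N.subtype) σ).subtype
        ((subRep F (ρV.comp T.subtype) (homComponent F (ρV.comp N.subtype) σ) hinv) t m)
      = ρV (t : G) ((homComponent F (ρV.comp N.subtype) σ).subtype m) := fun t m => rfl
  set τM := subRep F (ρV.comp T.subtype) (homComponent F (ρV.comp N.subtype) σ) hinv
    with hτM
  set Ψ := indLift τM ρV (homComponent F (ρV.comp N.subtype) σ).subtype hj with hΨ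
  have hΨmk : ∀ (g : G) (m : ↥(homComponent F (ρV.comp N.subtype) σ)),
      Ψ (indMk τM g m) = ρV g (m : V) :=
    fun g m => indLift_indMk τM ρV _ hj g m
  have hΨequi : ∀ (g : G) (z : IndCar F T τM), Ψ (IndRep F T τM g z) = ρV g (Ψ z) :=
    fun g z => indLift_equivariant τM ρV _ hj g z
  have hsurj : Function.Surjective Ψ := by
    have hrange : ∀ g : G, ∀ v ∈ LinearMap.range Ψ, ρV g v ∈ LinearMap.range Ψ := by
      rintro g v ⟨z, rfl⟩
      exact ⟨IndRep F T τM g z, hΨequi g z⟩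
    rcases hV.2 (LinearMap.range Ψ) hrange with h | h
    · exfalso
      obtain ⟨v, hvM, hvne⟩ := Submodule.ne_bot_iff _ |>.mp hMne
      apply hvne
      have hvr : v ∈ LinearMap.range Ψ := by
        refine ⟨indMk τM 1 ⟨v, hvM⟩, ?_⟩
        rw [hΨmk, map_one]
        rfl
      rw [h, Submodule.mem_bot] at hvr
      exact hvr
    · rw [← LinearMap.range_eq_top]
      exact h
  have hker : LinearMap.ker Ψ = ⊥ := by
    have hindirr := (part1 hN σ hσ hNT hT
      (↥(homComponent F (ρV.comp N.subtype) σ)) τM hirrM hliesM).1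
    have hkinv : ∀ g : G, ∀ z ∈ LinearMap.ker Ψ, IndRep F T τM g z ∈ LinearMap.ker Ψ := by
      intro g z hz
      rw [LinearMap.mem_ker, hΨequi, LinearMap.mem_ker.mp hz, map_zero]
    rcases hindirr.2 _ hkinv with h | h
    · exact h
    · exfalso
      obtain ⟨x, y, hxy⟩ := hV.1
      obtain ⟨zx, hzx⟩ := hsurj x
      obtain ⟨zy, hzy⟩ := hsurj y
      apply hxy
      have hx0 : Ψ zx = 0 := by
        have : zx ∈ LinearMap.ker Ψ := by rw [h]; trivial
        exact this
      have hy0 : Ψ zy = 0 := by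
        have : zy ∈ LinearMap.ker Ψ := by rw [h]; trivial
        exact this
      rw [← hzx, ← hzy, hx0, hy0]
  exact ⟨hinv, hirrM, hliesM,
    ⟨LinearEquiv.ofBijective Ψ ⟨LinearMap.ker_eq_bot.mp hker, hsurj⟩,
      fun g z => hΨequi g z⟩⟩

end CC

end CCMain

universe u

/-- Theorem 3.5 (Clifford correspondence): let `N ⊴ G` and let `W` be an irreducible
`FN`-module with inertia group `T`.  The maps `S ↦ ind_T^G S` and
`V ↦ (W`-homogeneous component of `V)` yield mutually inverse bijections between the
isomorphism classes of irreducible `FT`-modules lying over `W` and the isomorphism classes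
of irreducible `FG`-modules lying over `W`. -/
theorem clifford_correspondence
    (F : Type*) [Field F] {G : Type*} [Group G] (N : Subgroup G) (hN : N.Normal)
    (W : Type u) [AddCommGroup W] [Module F W] (σ : Representation F ↥N W)
    (hσ : IsIrreducibleRep F σ)
    (T : Subgroup G) (hNT : N ≤ T)
    (hT : ∀ g : G, g ∈ T ↔ RepIso F (σ.comp (conjHom hN g)) σ) :
    -- induction maps irreducible FT-modules lying over W to irreducible FG-modules lying
    -- over W, and taking the W-homogeneous component recovers the original module:
    (∀ (S : Type u) (_ : AddCommGroup S) (_ : Module F S) (τ : Representation F ↥T S),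
      IsIrreducibleRep F τ → LiesOver F (τ.comp (Subgroup.inclusion hNT)) σ →
        IsIrreducibleRep F (IndRep F T τ) ∧
        LiesOver F ((IndRep F T τ).comp N.subtype) σ ∧
        ∃ hinv : ∀ t : ↥T, ∀ v ∈ homComponent F ((IndRep F T τ).comp N.subtype) σ,
            ((IndRep F T τ).comp T.subtype) t v ∈
              homComponent F ((IndRep F T τ).comp N.subtype) σ,
          RepIso F
            (subRep F ((IndRep F T τ).comp T.subtype)
              (homComponent F ((IndRep F T τ).comp N.subtype) σ) hinv) τ) ∧
    -- the W-homogeneous component of an irreducible FG-module lying over W is an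
    -- irreducible FT-module lying over W, and induction recovers the original module:
    (∀ (V : Type u) (_ : AddCommGroup V) (_ : Module F V) (ρV : Representation F G V),
      IsIrreducibleRep F ρV → LiesOver F (ρV.comp N.subtype) σ →
        ∃ hinv : ∀ t : ↥T, ∀ v ∈ homComponent F (ρV.comp N.subtype) σ,
            (ρV.comp T.subtype) t v ∈ homComponent F (ρV.comp N.subtype) σ,
          IsIrreducibleRep F
            (subRep F (ρV.comp T.subtype) (homComponent F (ρV.comp N.subtype) σ) hinv) ∧
          LiesOver F
            ((subRep F (ρV.comp T.subtype) (homComponent F (ρV.comp N.subtype) σ)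
              hinv).comp (Subgroup.inclusion hNT)) σ ∧
          RepIso F
            (IndRep F T
              (subRep F (ρV.comp T.subtype) (homComponent F (ρV.comp N.subtype) σ) hinv))
            ρV) ∧
    -- both maps are well defined on isomorphism classes:
    (∀ (S₁ : Type u) (_ : AddCommGroup S₁) (_ : Module F S₁)
        (S₂ : Type u) (_ : AddCommGroup S₂) (_ : Module F S₂)
        (τ₁ : Representation F ↥T S₁) (τ₂ : Representation F ↥T S₂),
      RepIso F τ₁ τ₂ → RepIso F (IndRep F T τ₁) (IndRep F T τ₂)) := by
  refine ⟨?_, ?_, ?_⟩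
  · intro S _ _ τ hτ hlies
    exact CC.part1 hN σ hσ hNT hT S τ hτ hlies
  · intro V _ _ ρV hV hlies
    exact CC.part2 hN σ hσ hNT hT V ρV hV hlies
  · intro S₁ _ _ S₂ _ _ τ₁ τ₂ h
    exact CC.ind_repIso (τ := τ₁) (τ₂ := τ₂) h
end

section
/- Let F be a field, A an F-algebra, and W an irreducible A-module such that End_A(W) = F. Let U₁, U₂ be F-vector spaces and view each Uᵢ ⊗_F W as an A-module via a(u ⊗ w) = u ⊗ aw. Then every A-module homomorphism T : U₁ ⊗_F W → U₂ ⊗_F W has the form T = S ⊗ 1 for some F-linear map S : U₁ → U₂. -/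
open scoped TensorProduct

/-- The action of `a : A` on an `A`-module `W`, as an `F`-linear map. -/
def smulLinearMap (F : Type*) [Field F] (A : Type*) [Ring A] [Algebra F A]
    (W : Type*) [AddCommGroup W] [Module F W] [Module A W] [IsScalarTower F A W] (a : A) :
    W →ₗ[F] W where
  toFun w := a • w
  map_add' := smul_add a
  map_smul' c w := by simpa using (smul_comm c a w).symm

/-- Lemma 3.6: let `A` be an `F`-algebra and `W` an irreducible `A`-module with
`End_A(W) = F`.  Let `U₁, U₂` be `F`-vector spaces, and regard `Uᵢ ⊗_F W` as an `A`-module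
via `a • (u ⊗ w) = u ⊗ (a • w)`.  Then every `A`-module homomorphism
`T : U₁ ⊗_F W → U₂ ⊗_F W` has the form `T = S ⊗ 1` for some `F`-linear `S : U₁ → U₂`.
(`A`-linearity of the `F`-linear map `T` is expressed as commutation with the `A`-action on
the right tensor factor.) -/
theorem hom_of_tensor_with_simple_is_rTensor
    (F : Type*) [Field F] (A : Type*) [Ring A] [Algebra F A]
    (W : Type*) [AddCommGroup W] [Module F W] [Module A W] [IsScalarTower F A W]
    (hirr : IsSimpleModule A W)
    (hEnd : ∀ f : W →ₗ[A] W, ∃ c : F, ∀ w : W, f w = c • w)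
    (U₁ : Type*) [AddCommGroup U₁] [Module F U₁]
    (U₂ : Type*) [AddCommGroup U₂] [Module F U₂]
    (T : U₁ ⊗[F] W →ₗ[F] U₂ ⊗[F] W)
    (hT : ∀ a : A,
      T ∘ₗ LinearMap.lTensor U₁ (smulLinearMap F A W a)
        = LinearMap.lTensor U₂ (smulLinearMap F A W a) ∘ₗ T) :
    ∃ S : U₁ →ₗ[F] U₂, T = LinearMap.rTensor W S := by
  classical
  have hnt : Nontrivial W := IsSimpleModule.nontrivial A W
  obtain ⟨w₀, hw₀⟩ := exists_ne (0 : W)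
  set ι := Module.Basis.ofVectorSpaceIndex F U₂
  set b : Module.Basis ι F U₂ := Module.Basis.ofVectorSpace F U₂ with hb
  let e : U₂ ⊗[F] W ≃ₗ[F] (ι →₀ W) :=
    (TensorProduct.congr b.repr (LinearEquiv.refl F W)).trans
      (TensorProduct.finsuppScalarLeft F W ι)
  have he : ∀ (x : U₂) (w : W) (i : ι), e (x ⊗ₜ[F] w) i = b.repr x i • w := by
    intro x w i
    simp [e, TensorProduct.finsuppScalarLeft_apply_tmul_apply]
  -- injectivity of `· ⊗ₜ w₀`
  have hinj : ∀ x y : U₂, x ⊗ₜ[F] w₀ = y ⊗ₜ[F] w₀ → x = y := by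
    intro x y h
    have h2 : ∀ i, b.repr x i • w₀ = b.repr y i • w₀ := by
      intro i
      have := congrArg (fun z => e z i) h
      simpa [he] using this
    have h3 : b.repr x = b.repr y := by
      ext i
      have := h2 i
      have h4 : (b.repr x i - b.repr y i) • w₀ = 0 := by
        rw [sub_smul, this, sub_self]
      rcases smul_eq_zero.mp h4 with h5 | h5
      · exact sub_eq_zero.mp h5
      · exact absurd h5 hw₀
    exact b.repr.injective h3
  -- `e` intertwines the `A`-action componentwise
  have hEa : ∀ (a : A) (y : U₂ ⊗[F] W) (i : ι),
      e (LinearMap.lTensor U₂ (smulLinearMap F A W a) y) i = a • e y i := by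
    intro a y i
    induction y using TensorProduct.induction_on with
    | zero => simp
    | tmul x w =>
        simp only [LinearMap.lTensor_tmul, he]
        show b.repr x i • (a • w) = a • (b.repr x i • w)
        exact smul_comm _ _ _
    | add y z hy hz => simp [map_add, hy, hz]
  -- for each `u` there is `s` with `T (u ⊗ w) = s ⊗ w`
  have key : ∀ u : U₁, ∃ s : U₂, ∀ w : W, T (u ⊗ₜ[F] w) = s ⊗ₜ[F] w := by
    intro u
    have hcomp : ∀ i : ι, ∃ c : F, ∀ w : W, e (T (u ⊗ₜ[F] w)) i = c • w := by
      intro i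
      refine hEnd
        { toFun := fun w => e (T (u ⊗ₜ[F] w)) i
          map_add' := fun w w' => by
            simp [TensorProduct.tmul_add]
          map_smul' := fun a w => by
            have h1 : u ⊗ₜ[F] (a • w)
                = LinearMap.lTensor U₁ (smulLinearMap F A W a) (u ⊗ₜ[F] w) := by
              simp [smulLinearMap]
            have h2 := LinearMap.congr_fun (hT a) (u ⊗ₜ[F] w)
            simp only [LinearMap.coe_comp, Function.comp_apply] at h2
            show e (T (u ⊗ₜ[F] (a • w))) i = a • e (T (u ⊗ₜ[F] w)) i
            rw [h1, h2, hEa] }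
    choose c hc using hcomp
    have hfin : (Function.support c).Finite := by
      apply Set.Finite.subset (e (T (u ⊗ₜ[F] w₀))).finite_support
      intro i hi
      have : e (T (u ⊗ₜ[F] w₀)) i = c i • w₀ := hc i w₀
      simp only [Function.mem_support] at hi ⊢
      rw [this]
      exact smul_ne_zero hi hw₀
    let d : ι →₀ F := Finsupp.ofSupportFinite c hfin
    refine ⟨b.repr.symm d, fun w => ?_⟩
    apply e.injective
    ext i
    rw [hc i w, he]
    simp only [LinearEquiv.apply_symm_apply]
    rfl
  choose S₀ hS₀ using key
  refine ⟨{ toFun := S₀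
            map_add' := fun u u' => ?_
            map_smul' := fun k u => ?_ }, ?_⟩
  · apply hinj
    calc S₀ (u + u') ⊗ₜ[F] w₀ = T ((u + u') ⊗ₜ[F] w₀) := (hS₀ _ _).symm
      _ = T (u ⊗ₜ[F] w₀) + T (u' ⊗ₜ[F] w₀) := by rw [TensorProduct.add_tmul, map_add]
      _ = (S₀ u + S₀ u') ⊗ₜ[F] w₀ := by rw [hS₀, hS₀, TensorProduct.add_tmul]
  · apply hinj
    calc S₀ (k • u) ⊗ₜ[F] w₀ = T ((k • u) ⊗ₜ[F] w₀) := (hS₀ _ _).symm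
      _ = k • T (u ⊗ₜ[F] w₀) := by rw [← TensorProduct.smul_tmul', map_smul]
      _ = ((RingHom.id F) k • S₀ u) ⊗ₜ[F] w₀ := by
          rw [hS₀, TensorProduct.smul_tmul']; rfl
  · exact TensorProduct.ext' fun u w => by simp [hS₀]
end

section
/- Let F be a field, N ⊴ G groups, and let S : G → GL(V) be an irreducible representation over F such that V has an irreducible G-invariant FN-submodule W satisfying End_{FN}(W) = F. Let R : N → GL(W) be the representation afforded by W, i.e. R(x) = S(x)|_W for x ∈ N. Then there exist an F-vector space U, a representation S' : G → GL(U ⊗_F W) equivalent to S, and irreducible projective representations X : G → GL(W) and Y : G → GL(U) such that: (a) S'(g) = Y(g) ⊗ X(g) for all g ∈ G; (b) X extends R; (c) Y(x) = 1 for all x ∈ N. -/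
open scoped TensorProduct DirectSum

section CliffordAux

variable {F : Type*} [Field F] {H : Type*} [Monoid H]
variable {W : Type*} [AddCommGroup W] [Module F W]
variable {V : Type*} [AddCommGroup V] [Module F V]

/-- The space of `H`-intertwining linear maps from `W` (with rep `R`) to `V` (with rep `τ`). -/
def cliffordItw (R : Representation F H W) (τ : Representation F H V) :
    Submodule F (W →ₗ[F] V) where
  carrier := {f | ∀ (x : H) (w : W), f (R x w) = τ x (f w)}
  add_mem' := by intro a b ha hb x w; simp [ha x w, hb x w]
  zero_mem' := by intro x w; simp
  smul_mem' := by intro c f hf x w; simp [hf x w]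

lemma mem_cliffordItw {R : Representation F H W} {τ : Representation F H V} {f : W →ₗ[F] V} :
    f ∈ cliffordItw R τ ↔ ∀ (x : H) (w : W), f (R x w) = τ x (f w) := Iff.rfl

/-- Evaluation map `Hom_H(W,V) ⊗ W → V`. -/
noncomputable def cliffordEv (R : Representation F H W) (τ : Representation F H V) :
    (↥(cliffordItw R τ) ⊗[F] W) →ₗ[F] V :=
  TensorProduct.lift (cliffordItw R τ).subtype

@[simp] lemma cliffordEv_tmul (R : Representation F H W) (τ : Representation F H V)
    (f : ↥(cliffordItw R τ)) (w : W) :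
    cliffordEv R τ (f ⊗ₜ[F] w) = (f : W →ₗ[F] V) w := rfl

/-- Key independence lemma: evaluations of linearly independent intertwiners at
arbitrary vectors can only sum to zero trivially. -/
lemma cliffordIndep (R : Representation F H W) (τ : Representation F H V)
    (hirr : ∀ q : Submodule F W, (∀ x : H, ∀ w ∈ q, R x w ∈ q) → q = ⊥ ∨ q = ⊤)
    (hEnd : ∀ f : W →ₗ[F] W, (∀ (x : H) (w : W), f (R x w) = R x (f w)) →
      ∃ c : F, ∀ w : W, f w = c • w)
    {κ : Type*} (u : κ → ↥(cliffordItw R τ)) (hu : LinearIndependent F u) :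
    ∀ s : Finset κ, ∀ c : κ → W,
      (∑ i ∈ s, ((u i : W →ₗ[F] V) (c i))) = 0 → ∀ i ∈ s, c i = 0 := by
  classical
  intro s
  induction s using Finset.induction_on with
  | empty => intro c _ i hi; exact absurd hi (Finset.notMem_empty i)
  | @insert a s ha IH =>
    intro c hc
    rw [Finset.sum_insert ha] at hc
    -- the invariant submodule Z
    set Z : Submodule F W :=
      { carrier := {w | ∃ d : κ → W,
          (u a : W →ₗ[F] V) w + ∑ i ∈ s, (u i : W →ₗ[F] V) (d i) = 0}
        add_mem' := by
          rintro w w' ⟨d, hd⟩ ⟨d', hd'⟩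
          refine ⟨d + d', ?_⟩
          simp only [map_add, Pi.add_apply]
          rw [Finset.sum_add_distrib]
          have := congrArg₂ (· + ·) hd hd'
          simpa [add_add_add_comm] using this
        zero_mem' := ⟨0, by simp⟩
        smul_mem' := by
          rintro t w ⟨d, hd⟩
          refine ⟨t • d, ?_⟩
          simp only [map_smul, Pi.smul_apply]
          rw [← Finset.smul_sum, ← smul_add, hd, smul_zero] } with hZ
    have hZinv : ∀ x : H, ∀ w ∈ Z, R x w ∈ Z := by
      rintro x w ⟨d, hd⟩
      refine ⟨fun i => R x (d i), ?_⟩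
      have h1 : (u a : W →ₗ[F] V) (R x w) = τ x ((u a : W →ₗ[F] V) w) := (u a).2 x w
      have h2 : ∀ i ∈ s, (u i : W →ₗ[F] V) (R x (d i)) = τ x ((u i : W →ₗ[F] V) (d i)) :=
        fun i _ => (u i).2 x (d i)
      rw [h1, Finset.sum_congr rfl h2, ← map_sum, ← map_add, hd, map_zero]
    rcases hirr Z hZinv with hbot | htop
    · -- Z = ⊥ : c a = 0 and induction
      have hca : c a ∈ Z := ⟨c, hc⟩
      rw [hbot] at hca
      have hca0 : c a = 0 := hca
      rw [hca0, map_zero, zero_add] at hc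
      intro i hi
      rcases Finset.mem_insert.mp hi with rfl | hi'
      · exact hca0
      · exact IH c hc i hi'
    · -- Z = ⊤ : derive a contradiction
      exfalso
      -- uniqueness of the d's on s
      have huniq : ∀ (w : W) (d d' : κ → W),
          ((u a : W →ₗ[F] V) w + ∑ i ∈ s, (u i : W →ₗ[F] V) (d i) = 0) →
          ((u a : W →ₗ[F] V) w + ∑ i ∈ s, (u i : W →ₗ[F] V) (d' i) = 0) →
          ∀ i ∈ s, d i = d' i := by
        intro w d d' hd hd' i hi
        have hsum : ∑ j ∈ s, (u j : W →ₗ[F] V) ((d - d') j) = 0 := by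
          simp only [Pi.sub_apply, map_sub]
          rw [Finset.sum_sub_distrib]
          have := congrArg₂ (· - ·) hd hd'
          simpa [add_sub_add_comm] using this
        have := IH (d - d') hsum i hi
        simpa [sub_eq_zero] using this
      have hmem : ∀ w : W, w ∈ Z := fun w => htop ▸ Submodule.mem_top
      -- the choice function
      have hch : ∀ w : W, ∃ d : κ → W,
          (u a : W →ₗ[F] V) w + ∑ i ∈ s, (u i : W →ₗ[F] V) (d i) = 0 := fun w => hmem w
      choose d hd using hch
      -- for each j ∈ s, the map w ↦ d w j is linear and intertwining
      have hendj : ∀ j ∈ s, ∃ e : F, ∀ w : W, d w j = e • w := by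
        intro j hj
        have hadd : ∀ w w', d (w + w') j = d w j + d w' j := by
          intro w w'
          have h2 : (u a : W →ₗ[F] V) (w + w')
              + ∑ i ∈ s, (u i : W →ₗ[F] V) ((d w + d w') i) = 0 := by
            simp only [map_add, Pi.add_apply]
            rw [Finset.sum_add_distrib]
            have := congrArg₂ (· + ·) (hd w) (hd w')
            simpa [add_add_add_comm] using this
          exact (huniq (w + w') _ _ (hd (w + w')) h2 j hj)
        have hsmul : ∀ (t : F) w, d (t • w) j = t • d w j := by
          intro t w
          have h2 : (u a : W →ₗ[F] V) (t • w)
              + ∑ i ∈ s, (u i : W →ₗ[F] V) ((t • d w) i) = 0 := by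
            simp only [map_smul, Pi.smul_apply]
            rw [← Finset.smul_sum, ← smul_add, hd w, smul_zero]
          exact (huniq (t • w) _ _ (hd (t • w)) h2 j hj)
        have hcomm : ∀ (x : H) (w : W), d (R x w) j = R x (d w j) := by
          intro x w
          have h2 : (u a : W →ₗ[F] V) (R x w)
              + ∑ i ∈ s, (u i : W →ₗ[F] V) ((fun i => R x (d w i)) i) = 0 := by
            have h1 : (u a : W →ₗ[F] V) (R x w) = τ x ((u a : W →ₗ[F] V) w) := (u a).2 x w
            have h2' : ∀ i ∈ s, (u i : W →ₗ[F] V) (R x (d w i))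
                = τ x ((u i : W →ₗ[F] V) (d w i)) := fun i _ => (u i).2 x (d w i)
            rw [h1, Finset.sum_congr rfl h2', ← map_sum, ← map_add, hd w, map_zero]
          exact (huniq (R x w) _ _ (hd (R x w)) h2 j hj)
        obtain ⟨e, he⟩ := hEnd
          { toFun := fun w => d w j
            map_add' := hadd
            map_smul' := hsmul } hcomm
        exact ⟨e, he⟩
      choose e he using hendj
      -- the resulting linear relation among the u's
      have hrel : (u a : W →ₗ[F] V)
          + ∑ j ∈ s.attach, (e j.1 j.2) • (u j.1 : W →ₗ[F] V) = 0 := by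
        ext w
        have := hd w
        have hs : ∑ i ∈ s, (u i : W →ₗ[F] V) (d w i)
            = ∑ j ∈ s.attach, (e j.1 j.2) • ((u j.1 : W →ₗ[F] V) w) := by
          rw [← Finset.sum_attach s (fun i => (u i : W →ₗ[F] V) (d w i))]
          refine Finset.sum_congr rfl ?_
          intro j _
          rw [he j.1 j.2 w, map_smul]
        simp only [LinearMap.add_apply, LinearMap.sum_apply, LinearMap.smul_apply,
          LinearMap.zero_apply]
        rw [← hs]
        exact this
      -- contradict linear independence
      have hrelU : u a + ∑ j ∈ s.attach, (e j.1 j.2) • u j.1 = 0 := by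
        apply Subtype.ext
        push_cast
        exact hrel
      set g : κ → F := fun i => if h : i ∈ s then e i h else if i = a then 1 else 0 with hg
      have hzero : ∑ i ∈ insert a s, g i • u i = 0 := by
        rw [Finset.sum_insert ha]
        have hga : g a = 1 := by simp [hg, ha]
        have hs : ∑ i ∈ s, g i • u i = ∑ j ∈ s.attach, (e j.1 j.2) • u j.1 := by
          rw [← Finset.sum_attach s (fun i => g i • u i)]
          refine Finset.sum_congr rfl fun j _ => ?_
          simp [hg, j.2]
        rw [hga, one_smul, hs, hrelU]
      have := linearIndependent_iff'.mp hu (insert a s) g hzero a (Finset.mem_insert_self a s)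
      rw [hg] at this
      simp [ha] at this


lemma cliffordEv_injective (R : Representation F H W) (τ : Representation F H V)
    (hirr : ∀ q : Submodule F W, (∀ x : H, ∀ w ∈ q, R x w ∈ q) → q = ⊥ ∨ q = ⊤)
    (hEnd : ∀ f : W →ₗ[F] W, (∀ (x : H) (w : W), f (R x w) = R x (f w)) →
      ∃ c : F, ∀ w : W, f w = c • w) :
    Function.Injective (cliffordEv R τ) := by
  classical
  rw [← LinearMap.ker_eq_bot (M := ↥(cliffordItw R τ) ⊗[F] W) (M₂ := V), Submodule.eq_bot_iff]
  intro t ht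
  have ht0 : cliffordEv R τ t = 0 := ht
  set bU := Module.Basis.ofVectorSpace F ↥(cliffordItw R τ) with hbU
  set eq1 := (TensorProduct.congr bU.repr (LinearEquiv.refl F W)).trans
    (TensorProduct.finsuppScalarLeft F W _) with heq1
  set c := eq1 t with hc
  have hsymm : ∀ (i) (w : W), eq1.symm (Finsupp.single i w) = bU i ⊗ₜ[F] w := by
    intro i w
    rw [heq1, LinearEquiv.trans_symm, LinearEquiv.trans_apply,
      TensorProduct.finsuppScalarLeft_symm_apply_single, TensorProduct.congr_symm_tmul]
    simp
  have hdec : t = ∑ i ∈ c.support, bU i ⊗ₜ[F] c i := by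
    have h1 : t = eq1.symm (c.sum fun i w => Finsupp.single i w) := by
      rw [Finsupp.sum_single]
      exact (eq1.symm_apply_apply t).symm
    rw [h1, Finsupp.sum, map_sum]
    exact Finset.sum_congr rfl fun i _ => hsymm i (c i)
  have hev : ∑ i ∈ c.support, ((bU i : W →ₗ[F] V) (c i)) = 0 := by
    rw [hdec, map_sum] at ht0
    simpa using ht0
  have hZ := cliffordIndep R τ hirr hEnd (fun i => bU i) bU.linearIndependent c.support c hev
  have hc0 : c = 0 := by
    ext i
    by_cases h : i ∈ c.support
    · exact hZ i h
    · exact Finsupp.notMem_support_iff.mp h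
  have : t = eq1.symm c := (eq1.symm_apply_apply t).symm
  rw [this, hc0, map_zero]

end CliffordAux

universe v

set_option maxHeartbeats 1000000 in
/-- Theorem 3.7 (Clifford): let `N ⊴ G` and let `S : G → GL(V)` be an irreducible
representation such that `V` has an irreducible `G`-invariant `FN`-submodule `W` with
`End_{FN}(W) = F`, affording `R : N → GL(W)`.  Then there are a representation
`S' : G → GL(U ⊗_F W)` equivalent to `S` and irreducible projective representations
`X : G → GL(W)` and `Y : G → GL(U)` with (a) `S'(g) = Y(g) ⊗ X(g)` for all `g`,
(b) `X` extends `R`, and (c) `Y(x) = 1` for all `x ∈ N`. -/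
theorem clifford_projective_factorization
    (F : Type*) [Field F] {G : Type*} [Group G] (N : Subgroup G) (hN : N.Normal)
    (V : Type v) [AddCommGroup V] [Module F V] (ρ : Representation F G V)
    (hρ : IsIrreducibleRep F ρ)
    (p : Submodule F V) (hp : ∀ n : ↥N, ∀ v ∈ p, (ρ.comp N.subtype) n v ∈ p)
    (hpirr : IsIrreducibleRep F (subRep F (ρ.comp N.subtype) p hp))
    (hGinv : ∀ g : G,
      RepIso F ((subRep F (ρ.comp N.subtype) p hp).comp (conjHom hN g))
        (subRep F (ρ.comp N.subtype) p hp))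
    (hEnd : ∀ f : ↥p →ₗ[F] ↥p,
      (∀ (n : ↥N) (w : ↥p), f ((subRep F (ρ.comp N.subtype) p hp) n w)
          = (subRep F (ρ.comp N.subtype) p hp) n (f w)) →
        ∃ c : F, ∀ w : ↥p, f w = c • w) :
    ∃ (U : Type v) (_ : AddCommGroup U) (_ : Module F U)
      (ρ' : Representation F G (U ⊗[F] ↥p))
      (X : G → (↥p →ₗ[F] ↥p)) (Y : G → (U →ₗ[F] U)) (α β : G → G → Fˣ),
      RepIso F ρ ρ' ∧
      IsProjRep F X α ∧ IsProjIrred F X ∧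
      IsProjRep F Y β ∧ IsProjIrred F Y ∧
      (∀ g : G, ρ' g = TensorProduct.map (Y g) (X g)) ∧
      (∀ n : ↥N, X (n : G) = (subRep F (ρ.comp N.subtype) p hp) n) ∧
      (∀ n : ↥N, Y (n : G) = LinearMap.id) := by
  classical
  set Rr := subRep F (ρ.comp N.subtype) p hp with hRrdef
  obtain ⟨hWnt, hWirr⟩ := hpirr
  have hconjconj : ∀ (g : G) (x : ↥N), conjHom hN g (conjHom hN g⁻¹ x) = x := by
    intro g x; ext; show g * (g⁻¹ * ↑x * g⁻¹⁻¹) * g⁻¹ = ↑x; group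
  have hconjconj' : ∀ (g : G) (x : ↥N), conjHom hN g⁻¹ (conjHom hN g x) = x := by
    intro g x; ext; show g⁻¹ * (g * ↑x * g⁻¹) * g⁻¹⁻¹ = ↑x; group
  have hconjmul : ∀ (g₁ g₂ : G) (x : ↥N),
      conjHom hN g₁ (conjHom hN g₂ x) = conjHom hN (g₁ * g₂) x := by
    intro g₁ g₂ x; ext
    show g₁ * (g₂ * ↑x * g₂⁻¹) * g₁⁻¹ = (g₁ * g₂) * ↑x * (g₁ * g₂)⁻¹
    group
  -- Step 1: the system of equivalences `E g` intertwining `Rr` with its `g`-conjugate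
  obtain ⟨E, hE, hEN⟩ : ∃ E : G → (↥p ≃ₗ[F] ↥p),
      (∀ (g : G) (x : ↥N) (w : ↥p), E g (Rr x w) = Rr (conjHom hN g x) (E g w)) ∧
      (∀ n : ↥N, (E (n : G)).toLinearMap = Rr n) := by
    have hc1 : ∀ x : ↥N, (Rr x) ∘ₗ (Rr x⁻¹) = LinearMap.id := by
      intro x
      rw [← Module.End.mul_eq_comp, ← map_mul, mul_inv_cancel, map_one, Module.End.one_eq_id]
    have hc2 : ∀ x : ↥N, (Rr x⁻¹) ∘ₗ (Rr x) = LinearMap.id := by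
      intro x
      rw [← Module.End.mul_eq_comp, ← map_mul, inv_mul_cancel, map_one, Module.End.one_eq_id]
    refine ⟨fun g => if h : g ∈ N then
        LinearEquiv.ofLinear (Rr ⟨g, h⟩) (Rr (⟨g, h⟩ : ↥N)⁻¹) (hc1 _) (hc2 _)
      else (Classical.choose (hGinv g)).symm, ?_, ?_⟩
    · intro g x w
      by_cases h : g ∈ N
      · simp only [dif_pos h]
        show Rr ⟨g, h⟩ (Rr x w) = Rr (conjHom hN g x) (Rr ⟨g, h⟩ w)
        have key : (⟨g, h⟩ : ↥N) * x = conjHom hN g x * ⟨g, h⟩ := by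
          ext; show g * ↑x = (g * ↑x * g⁻¹) * g; group
        calc Rr ⟨g, h⟩ (Rr x w) = (Rr ⟨g, h⟩ * Rr x) w := rfl
          _ = Rr ((⟨g, h⟩ : ↥N) * x) w := by rw [map_mul]
          _ = Rr (conjHom hN g x * ⟨g, h⟩) w := by rw [key]
          _ = (Rr (conjHom hN g x) * Rr ⟨g, h⟩) w := by rw [map_mul]
          _ = Rr (conjHom hN g x) (Rr ⟨g, h⟩ w) := rfl
      · simp only [dif_neg h]
        have spec := Classical.choose_spec (hGinv g)
        apply (Classical.choose (hGinv g)).injective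
        rw [LinearEquiv.apply_symm_apply]
        symm
        calc Classical.choose (hGinv g)
              (Rr (conjHom hN g x) ((Classical.choose (hGinv g)).symm w))
            = Rr x (Classical.choose (hGinv g) ((Classical.choose (hGinv g)).symm w)) :=
              spec x ((Classical.choose (hGinv g)).symm w)
          _ = Rr x w := by rw [LinearEquiv.apply_symm_apply]
    · intro n
      simp only [dif_pos n.2, Subtype.coe_eta]
      rfl
  -- inverse intertwining property
  have hE' : ∀ (g : G) (x : ↥N) (w : ↥p),
      (E g).symm (Rr x w) = Rr (conjHom hN g⁻¹ x) ((E g).symm w) := by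
    intro g x w
    apply (E g).injective
    rw [LinearEquiv.apply_symm_apply, hE g (conjHom hN g⁻¹ x) ((E g).symm w), hconjconj,
      LinearEquiv.apply_symm_apply]
  -- Step 2: the factor set α
  obtain ⟨α, hα⟩ : ∃ α : G → G → Fˣ, ∀ (g₁ g₂ : G) (w : ↥p),
      E g₁ (E g₂ w) = ((α g₁ g₂ : F)) • E (g₁ * g₂) w := by
    have hex : ∀ g₁ g₂ : G, ∃ c : Fˣ, ∀ w, E g₁ (E g₂ w) = (c : F) • E (g₁ * g₂) w := by
      intro g₁ g₂
      set T : ↥p →ₗ[F] ↥p :=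
        (E (g₁ * g₂)).symm.toLinearMap ∘ₗ (E g₁).toLinearMap ∘ₗ (E g₂).toLinearMap with hT
      have hTapp : ∀ w, T w = (E (g₁ * g₂)).symm (E g₁ (E g₂ w)) := fun w => rfl
      have hTcomm : ∀ (x : ↥N) (w : ↥p), T (Rr x w) = Rr x (T w) := by
        intro x w
        rw [hTapp, hTapp, hE g₂, hE g₁, hconjmul, hE' (g₁ * g₂), hconjconj']
      obtain ⟨c, hc⟩ := hEnd T hTcomm
      have hcne : c ≠ 0 := by
        obtain ⟨w, hw⟩ := exists_ne (0 : ↥p)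
        intro h0
        apply hw
        have h1 : T w = 0 := by rw [hc w, h0, zero_smul]
        rw [hTapp] at h1
        have h2 := (LinearEquiv.map_eq_zero_iff _).mp h1
        have h3 := (LinearEquiv.map_eq_zero_iff _).mp h2
        exact (LinearEquiv.map_eq_zero_iff _).mp h3
      refine ⟨Units.mk0 c hcne, fun w => ?_⟩
      have h4 : E g₁ (E g₂ w) = E (g₁ * g₂) (T w) := by
        rw [hTapp, LinearEquiv.apply_symm_apply]
      rw [h4, hc w, map_smul]
      rfl
    choose α hα using hex
    exact ⟨α, hα⟩
  -- Step 3: the space of intertwiners U and the evaluation map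
  set UM := cliffordItw Rr (ρ.comp N.subtype) with hUM
  have hmemUM : ∀ (f : ↥UM) (x : ↥N) (w : ↥p),
      (f : ↥p →ₗ[F] V) (Rr x w) = ρ (x : G) ((f : ↥p →ₗ[F] V) w) := fun f x w => f.2 x w
  set ev := cliffordEv Rr (ρ.comp N.subtype) with hev
  have hevtmul : ∀ (f : ↥UM) (w : ↥p), ev (f ⊗ₜ[F] w) = (f : ↥p →ₗ[F] V) w := fun f w => rfl
  have hf0mem : p.subtype ∈ UM := by
    rw [hUM, mem_cliffordItw]
    intro x w
    rfl
  set f0 : ↥UM := ⟨p.subtype, hf0mem⟩ with hf0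
  -- Step 4: the projective representation Y on U
  obtain ⟨Y, hY⟩ : ∃ Y : G → (↥UM →ₗ[F] ↥UM), ∀ (g : G) (f : ↥UM),
      ((Y g f : ↥p →ₗ[F] V)) = ρ g ∘ₗ (f : ↥p →ₗ[F] V) ∘ₗ (E g).symm.toLinearMap := by
    have hmem : ∀ (g : G) (f : ↥UM),
        ρ g ∘ₗ (f : ↥p →ₗ[F] V) ∘ₗ (E g).symm.toLinearMap ∈ UM := by
      intro g f
      apply mem_cliffordItw.mpr
      intro x w
      simp only [LinearMap.comp_apply, LinearEquiv.coe_coe]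
      rw [hE' g x w, hmemUM f]
      have hg : g * (g⁻¹ * (x : G) * g⁻¹⁻¹) = ↑x * g := by group
      show (ρ g) ((ρ (g⁻¹ * ↑x * g⁻¹⁻¹)) ((f : ↥p →ₗ[F] V) ((E g).symm w))) = _
      calc (ρ g) ((ρ (g⁻¹ * ↑x * g⁻¹⁻¹)) ((f : ↥p →ₗ[F] V) ((E g).symm w)))
          = (ρ g * ρ (g⁻¹ * ↑x * g⁻¹⁻¹)) ((f : ↥p →ₗ[F] V) ((E g).symm w)) := rfl
        _ = (ρ (g * (g⁻¹ * ↑x * g⁻¹⁻¹))) ((f : ↥p →ₗ[F] V) ((E g).symm w)) := by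
            rw [← map_mul]
        _ = (ρ (↑x * g)) ((f : ↥p →ₗ[F] V) ((E g).symm w)) := by rw [hg]
        _ = (ρ ↑x * ρ g) ((f : ↥p →ₗ[F] V) ((E g).symm w)) := by rw [← map_mul]
        _ = (ρ ↑x) ((ρ g) ((f : ↥p →ₗ[F] V) ((E g).symm w))) := rfl
    refine ⟨fun g =>
      { toFun := fun f => ⟨ρ g ∘ₗ (f : ↥p →ₗ[F] V) ∘ₗ (E g).symm.toLinearMap, hmem g f⟩
        map_add' := by
          intro a b
          apply Subtype.ext
          simp only [Submodule.coe_add, LinearMap.add_comp, LinearMap.comp_add]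
        map_smul' := by
          intro c a
          apply Subtype.ext
          simp only [SetLike.val_smul, RingHom.id_apply, LinearMap.smul_comp,
            LinearMap.comp_smul] },
      fun g f => rfl⟩
  have hYapp : ∀ (g : G) (f : ↥UM) (w : ↥p),
      ((Y g f : ↥p →ₗ[F] V)) w = ρ g ((f : ↥p →ₗ[F] V) ((E g).symm w)) := by
    intro g f w
    rw [hY g f]
    rfl
  -- Y is trivial on N
  have hYN : ∀ n : ↥N, Y (n : G) = LinearMap.id := by
    intro n
    apply LinearMap.ext; intro f
    apply Subtype.ext
    apply LinearMap.ext; intro w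
    rw [LinearMap.id_apply, hYapp]
    have h1 : Rr n ((E (n : G)).symm w) = w := by
      rw [← hEN n]
      exact (E (n : G)).apply_symm_apply w
    calc ρ (n : G) ((f : ↥p →ₗ[F] V) ((E (n : G)).symm w))
        = (f : ↥p →ₗ[F] V) (Rr n ((E (n : G)).symm w)) := (hmemUM f n _).symm
      _ = (f : ↥p →ₗ[F] V) w := by rw [h1]
  have hY1 : Y (1 : G) = LinearMap.id := by
    have := hYN 1
    rwa [OneMemClass.coe_one] at this
  -- composition law for Y
  have hEsymm2 : ∀ (g₁ g₂ : G) (w : ↥p), (E g₂).symm ((E g₁).symm w)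
      = ((α g₁ g₂ : F))⁻¹ • (E (g₁ * g₂)).symm w := by
    intro g₁ g₂ w
    apply (E g₂).injective
    apply (E g₁).injective
    rw [LinearEquiv.apply_symm_apply, LinearEquiv.apply_symm_apply, map_smul, map_smul,
      hα g₁ g₂, LinearEquiv.apply_symm_apply, smul_smul,
      inv_mul_cancel₀ (Units.ne_zero (α g₁ g₂)), one_smul]
  have hYcomp : ∀ g₁ g₂ : G, Y g₁ ∘ₗ Y g₂ = (((α g₁ g₂)⁻¹ : Fˣ) : F) • Y (g₁ * g₂) := by
    intro g₁ g₂
    apply LinearMap.ext; intro f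
    apply Subtype.ext
    apply LinearMap.ext; intro w
    rw [LinearMap.comp_apply, hYapp, hYapp, hEsymm2 g₁ g₂ w]
    rw [LinearMap.smul_apply, SetLike.val_smul, LinearMap.smul_apply, hYapp]
    rw [Units.val_inv_eq_inv_val, map_smul, map_smul, map_smul]
    congr 1
    rw [← Module.End.mul_apply, ← map_mul]
  have hYbij : ∀ g : G, Function.Bijective (Y g) := by
    intro g
    have happ : ∀ (a b : G) (u : ↥UM), Y a (Y b u) = (((α a b)⁻¹ : Fˣ) : F) • Y (a * b) u := by
      intro a b u
      have h3 := LinearMap.ext_iff.mp (hYcomp a b) u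
      rw [LinearMap.comp_apply, LinearMap.smul_apply] at h3
      exact h3
    constructor
    · intro a b hab
      have h1 : Y g⁻¹ (Y g a) = Y g⁻¹ (Y g b) := by rw [hab]
      rw [happ, happ, inv_mul_cancel, hY1, LinearMap.id_apply, LinearMap.id_apply] at h1
      exact smul_right_injective ↥UM (Units.ne_zero ((α g⁻¹ g)⁻¹)) h1
    · intro u
      refine ⟨Y g⁻¹ (((α g g⁻¹ : Fˣ) : F) • u), ?_⟩
      rw [happ, mul_inv_cancel, hY1, LinearMap.id_apply, smul_smul, ← Units.val_mul,
        inv_mul_cancel, Units.val_one, one_smul]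
  -- Step 5: ev is bijective
  have hevY : ∀ g : G, ev ∘ₗ TensorProduct.map (Y g) ((E g).toLinearMap) = ρ g ∘ₗ ev := by
    intro g
    apply TensorProduct.ext'
    intro f w
    rw [LinearMap.comp_apply, LinearMap.comp_apply, TensorProduct.map_tmul, hevtmul,
      hevtmul, hYapp]
    simp only [LinearEquiv.coe_coe, LinearEquiv.symm_apply_apply]
  have hinj : Function.Injective ev := cliffordEv_injective Rr (ρ.comp N.subtype) hWirr hEnd
  have hsurj : Function.Surjective ev := by
    rw [← LinearMap.range_eq_top]
    have hrange : ∀ g : G, ∀ v ∈ LinearMap.range ev, ρ g v ∈ LinearMap.range ev := by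
      rintro g v ⟨t, rfl⟩
      exact ⟨TensorProduct.map (Y g) ((E g).toLinearMap) t,
        LinearMap.ext_iff.mp (hevY g) t⟩
    rcases hρ.2 (LinearMap.range ev) hrange with hbot | htop
    · exfalso
      obtain ⟨w, hw⟩ := exists_ne (0 : ↥p)
      have hmem2 : ((w : V)) ∈ LinearMap.range ev := ⟨f0 ⊗ₜ[F] w, by rw [hevtmul]; rfl⟩
      rw [hbot] at hmem2
      have hw0 : (w : V) = 0 := hmem2
      exact hw (Subtype.ext hw0)
    · exact htop
  set evE := LinearEquiv.ofBijective ev ⟨hinj, hsurj⟩ with hevE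
  have hevEapp : ∀ t, evE t = ev t := fun t => rfl
  -- Step 6: the conjugated representation ρ'
  obtain ⟨ρ', hρ'⟩ : ∃ ρ' : Representation F G (↥UM ⊗[F] ↥p),
      ∀ g : G, ρ' g = evE.symm.toLinearMap ∘ₗ (ρ g) ∘ₗ evE.toLinearMap := by
    refine ⟨{ toFun := fun g => evE.symm.toLinearMap ∘ₗ (ρ g) ∘ₗ evE.toLinearMap,
              map_one' := ?_, map_mul' := ?_ }, fun g => rfl⟩
    · apply LinearMap.ext; intro t
      show evE.symm (ρ 1 (evE t)) = t
      rw [map_one]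
      show evE.symm (evE t) = t
      rw [LinearEquiv.symm_apply_apply]
    · intro g₁ g₂
      apply LinearMap.ext; intro t
      show evE.symm (ρ (g₁ * g₂) (evE t)) = evE.symm (ρ g₁ (evE (evE.symm (ρ g₂ (evE t)))))
      rw [LinearEquiv.apply_symm_apply, map_mul]
      rfl
  have hrepiso : RepIso F ρ ρ' := by
    refine ⟨evE.symm, fun g v => ?_⟩
    rw [hρ' g]
    show evE.symm (ρ g v) = evE.symm (ρ g (evE (evE.symm v)))
    rw [LinearEquiv.apply_symm_apply]
  have hfactor : ∀ g : G, ρ' g = TensorProduct.map (Y g) ((E g).toLinearMap) := by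
    intro g
    rw [hρ' g]
    apply LinearMap.ext; intro t
    show evE.symm (ρ g (evE t)) = TensorProduct.map (Y g) ((E g).toLinearMap) t
    rw [LinearEquiv.symm_apply_eq]
    show ρ g (ev t) = evE (TensorProduct.map (Y g) ((E g).toLinearMap) t)
    rw [hevEapp]
    exact (LinearMap.ext_iff.mp (hevY g) t).symm
  -- Step 7: X is an irreducible projective representation
  have hXbij : ∀ g : G, Function.Bijective ((E g).toLinearMap : ↥p →ₗ[F] ↥p) :=
    fun g => (E g).bijective
  have hXcomp : ∀ g₁ g₂ : G, ((E g₁).toLinearMap) ∘ₗ ((E g₂).toLinearMap)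
      = ((α g₁ g₂ : F)) • (E (g₁ * g₂)).toLinearMap := by
    intro g₁ g₂
    apply LinearMap.ext; intro w
    simp only [LinearMap.comp_apply, LinearMap.smul_apply, LinearEquiv.coe_coe]
    exact hα g₁ g₂ w
  have hXirr : ∀ q : Submodule F ↥p,
      (∀ g : G, ∀ w ∈ q, ((E g).toLinearMap : ↥p →ₗ[F] ↥p) w ∈ q) → q = ⊥ ∨ q = ⊤ := by
    intro q hq
    apply hWirr q
    intro x w hw
    have := hq (x : G) w hw
    rwa [hEN x] at this
  -- Step 8: Y is an irreducible projective representation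
  have hUMnt : Nontrivial ↥UM := by
    obtain ⟨w, hw⟩ := exists_ne (0 : ↥p)
    refine nontrivial_of_ne f0 0 fun h0 => ?_
    have h1 : (f0 : ↥p →ₗ[F] V) w = 0 := by rw [h0]; rfl
    have h2 : (w : V) = 0 := h1
    exact hw (Subtype.ext h2)
  have hYirr : ∀ q : Submodule F ↥UM,
      (∀ g : G, ∀ u ∈ q, Y g u ∈ q) → q = ⊥ ∨ q = ⊤ := by
    intro q hq
    by_cases hqb : q = ⊥
    · exact Or.inl hqb
    right
    obtain ⟨f, hfq, hf0'⟩ := Submodule.exists_mem_ne_zero_of_ne_bot hqb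
    set S : Set V := {v | ∃ u : ↥UM, u ∈ q ∧ ∃ w : ↥p, (u : ↥p →ₗ[F] V) w = v} with hS
    have hSinv : ∀ g : G, ∀ v ∈ Submodule.span F S, ρ g v ∈ Submodule.span F S := by
      intro g v hv
      induction hv using Submodule.span_induction with
      | mem v hv =>
        obtain ⟨u, huq, w, rfl⟩ := hv
        apply Submodule.subset_span
        refine ⟨Y g u, hq g u huq, E g w, ?_⟩
        rw [hYapp]
        rw [LinearEquiv.symm_apply_apply]
      | zero => rw [map_zero]; exact Submodule.zero_mem _
      | add x y _ _ hx hy => rw [map_add]; exact Submodule.add_mem _ hx hy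
      | smul c x _ hx => rw [map_smul]; exact Submodule.smul_mem _ c hx
    rcases hρ.2 (Submodule.span F S) hSinv with hsb | hst
    · exfalso
      have hf1 : (f : ↥p →ₗ[F] V) ≠ 0 := fun h => hf0' (Subtype.ext h)
      obtain ⟨w, hw⟩ : ∃ w, (f : ↥p →ₗ[F] V) w ≠ 0 := by
        by_contra h
        push_neg at h
        exact hf1 (LinearMap.ext h)
      have hmem3 : (f : ↥p →ₗ[F] V) w ∈ Submodule.span F S :=
        Submodule.subset_span ⟨f, hfq, w, rfl⟩
      rw [hsb] at hmem3
      exact hw hmem3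
    rw [Submodule.eq_top_iff']
    intro u
    obtain ⟨w₀, hw₀⟩ := exists_ne (0 : ↥p)
    obtain ⟨φ, hφ⟩ : ∃ φ : Module.Dual F ↥p, φ w₀ ≠ 0 := by
      by_contra h
      push_neg at h
      exact hw₀ ((Module.forall_dual_apply_eq_zero_iff F w₀).mp h)
    set cφ : V →ₗ[F] ↥UM := (TensorProduct.rid F ↥UM).toLinearMap
      ∘ₗ (TensorProduct.map (LinearMap.id) φ) ∘ₗ evE.symm.toLinearMap with hcφ
    have hcφval : ∀ (u' : ↥UM) (w : ↥p), cφ ((u' : ↥p →ₗ[F] V) w) = φ w • u' := by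
      intro u' w
      have h1 : evE.symm ((u' : ↥p →ₗ[F] V) w) = u' ⊗ₜ[F] w := by
        apply evE.injective
        rw [LinearEquiv.apply_symm_apply]
        rw [hevEapp, hevtmul]
      rw [hcφ]
      simp only [LinearMap.comp_apply, LinearEquiv.coe_coe]
      rw [h1, TensorProduct.map_tmul]
      simp [TensorProduct.rid_tmul]
    have hsub : Submodule.span F S ≤ q.comap cφ := by
      apply Submodule.span_le.mpr
      rintro v ⟨u', hu'q, w, rfl⟩
      show cφ ((u' : ↥p →ₗ[F] V) w) ∈ q
      rw [hcφval]
      exact Submodule.smul_mem q _ hu'q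
    have hu0 : cφ ((u : ↥p →ₗ[F] V) w₀) ∈ q := hsub (hst ▸ Submodule.mem_top)
    rw [hcφval] at hu0
    have hu1 := Submodule.smul_mem q (φ w₀)⁻¹ hu0
    rwa [smul_smul, inv_mul_cancel₀ hφ, one_smul] at hu1
  -- Conclusion
  refine ⟨↥UM, inferInstance, inferInstance, ρ', fun g => (E g).toLinearMap, Y, α,
    fun g₁ g₂ => (α g₁ g₂)⁻¹, hrepiso, ⟨hXbij, hXcomp⟩, ⟨hWnt, hXirr⟩, ⟨hYbij, ?_⟩,
    ⟨hUMnt, hYirr⟩, hfactor, hEN, hYN⟩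
  intro g₁ g₂
  rw [hYcomp g₁ g₂]
end

section
/- Let F be a field, N ⊴ G groups, and let R : N → GL(W) be an irreducible representation over F that is G-invariant and satisfies End_{FN}(W) = F. Let X : G → GL(W) be a projective representation extending R with factor set α ∈ Z²(G,F*) satisfying α(g₁x₁, g₂x₂) = α(g₁,g₂) for all g₁,g₂ ∈ G and x₁,x₂ ∈ N. Then there exists an irreducible projective representation Y : G → GL(U) with factor set β = α⁻¹ and Y(x) = 1 for all x ∈ N. Moreover, for any such Y, the map S : G → GL(U ⊗_F W) defined by S(g) = Y(g) ⊗ X(g) is an irreducible (ordinary) representation of G, and the restriction of U ⊗_F W to N is the direct sum of dim_F(U) copies of W. -/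
open scoped TensorProduct DirectSum

universe u

section CliffordDensity
variable {F : Type*} [Field F]
variable {H : Type*} [Monoid H] {W : Type*} [AddCommGroup W] [Module F W]

noncomputable def repSpan (σ : Representation F H W) : Submodule F (W →ₗ[F] W) :=
  Submodule.span F (Set.range fun h : H => (σ h : W →ₗ[F] W))

theorem id_mem_repSpan (σ : Representation F H W) : LinearMap.id ∈ repSpan σ := by
  have : (σ 1 : W →ₗ[F] W) = LinearMap.id := by rw [map_one]; rfl
  rw [← this]; exact Submodule.subset_span ⟨1, rfl⟩

theorem comp_mem_repSpan (σ : Representation F H W) (h : H) {a : W →ₗ[F] W}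
    (ha : a ∈ repSpan σ) : (σ h : W →ₗ[F] W) ∘ₗ a ∈ repSpan σ := by
  induction ha using Submodule.span_induction with
  | mem x hx =>
    obtain ⟨m, rfl⟩ := hx
    have : (σ h : W →ₗ[F] W) ∘ₗ σ m = σ (h * m) := by rw [map_mul]; rfl
    rw [this]; exact Submodule.subset_span ⟨h * m, rfl⟩
  | zero => rw [LinearMap.comp_zero]; exact zero_mem _
  | add x y _ _ hx hy => rw [LinearMap.comp_add]; exact add_mem hx hy
  | smul c x _ hx => rw [LinearMap.comp_smul]; exact Submodule.smul_mem _ c hx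

/-- Jacobson density for an irreducible representation with scalar endomorphisms. -/
theorem rep_density (σ : Representation F H W)
    (hirr : ∀ p : Submodule F W, (∀ h : H, ∀ v ∈ p, σ h v ∈ p) → p = ⊥ ∨ p = ⊤)
    (hEnd : ∀ f : W →ₗ[F] W, (∀ (h : H) (w : W), f (σ h w) = σ h (f w)) →
      ∃ c : F, ∀ w : W, f w = c • w) :
    ∀ (k : ℕ) (w : Fin k → W), LinearIndependent F w → ∀ v : Fin k → W,
      ∃ a ∈ repSpan σ, ∀ i, a (w i) = v i := by
  intro k
  induction k with
  | zero => exact fun w _ v => ⟨0, zero_mem _, fun i => i.elim0⟩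
  | succ k IH =>
    have step : ∀ (w : Fin (k + 1) → W), LinearIndependent F w → ∀ tgt : W,
        ∃ a ∈ repSpan σ, a (w 0) = tgt ∧ ∀ i : Fin k, a (w i.succ) = 0 := by
      intro w hw tgt
      set B' : Submodule F W :=
        { carrier := {x | ∃ a ∈ repSpan σ, (∀ i : Fin k, a (w i.succ) = 0) ∧ a (w 0) = x}
          zero_mem' := ⟨0, zero_mem _, fun i => rfl, rfl⟩
          add_mem' := by
            rintro x y ⟨a, ha, hak, rfl⟩ ⟨a', ha', hak', rfl⟩
            exact ⟨a + a', add_mem ha ha', fun i => by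
              simp [LinearMap.add_apply, hak i, hak' i], rfl⟩
          smul_mem' := by
            rintro c x ⟨a, ha, hak, rfl⟩
            exact ⟨c • a, Submodule.smul_mem _ c ha, fun i => by
              simp [LinearMap.smul_apply, hak i], rfl⟩ } with hB'def
      by_cases hB : B' = ⊥
      · exfalso
        have uniq : ∀ a ∈ repSpan σ, ∀ a' ∈ repSpan σ,
            (∀ i : Fin k, a (w i.succ) = a' (w i.succ)) → a (w 0) = a' (w 0) := by
          intro a ha a' ha' hagree
          have hmem : (a - a') (w 0) ∈ B' :=
            ⟨a - a', sub_mem ha ha', fun i => by simp [LinearMap.sub_apply, hagree i], rfl⟩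
          rw [hB] at hmem
          have : a (w 0) - a' (w 0) = 0 := by simpa using hmem
          exact sub_eq_zero.mp this
        have hwt : LinearIndependent F (fun i : Fin k => w i.succ) :=
          hw.comp Fin.succ (Fin.succ_injective k)
        have choice : ∀ t : Fin k → W, ∃ a, a ∈ repSpan σ ∧ ∀ i, a (w i.succ) = t i := by
          intro t
          obtain ⟨a, ha, hat⟩ := IH (fun i => w i.succ) hwt t
          exact ⟨a, ha, hat⟩
        choose A hA1 hA2 using choice
        -- each coordinate map is a scalar
        have hf : ∀ j : Fin k, ∃ c : F, ∀ x : W, A (Pi.single j x) (w 0) = c • x := by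
          intro j
          have hadd : ∀ x y : W,
              A (Pi.single j (x + y)) (w 0) = A (Pi.single j x) (w 0) + A (Pi.single j y) (w 0) := by
            intro x y
            have := uniq (A (Pi.single j (x + y))) (hA1 _)
              (A (Pi.single j x) + A (Pi.single j y)) (add_mem (hA1 _) (hA1 _)) (by
                intro i
                classical
                simp only [hA2, LinearMap.add_apply, Pi.single_apply]
                split_ifs <;> simp)
            simpa using this
          have hsmul : ∀ (c : F) (x : W),
              A (Pi.single j (c • x)) (w 0) = c • A (Pi.single j x) (w 0) := by
            intro c x
            have := uniq (A (Pi.single j (c • x))) (hA1 _)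
              (c • A (Pi.single j x)) (Submodule.smul_mem _ c (hA1 _)) (by
                intro i
                classical
                simp only [hA2, LinearMap.smul_apply, Pi.single_apply]
                split_ifs <;> simp)
            simpa using this
          have hcomm : ∀ (h : H) (x : W),
              A (Pi.single j (σ h x)) (w 0) = σ h (A (Pi.single j x) (w 0)) := by
            intro h x
            have := uniq (A (Pi.single j (σ h x))) (hA1 _)
              ((σ h : W →ₗ[F] W) ∘ₗ A (Pi.single j x)) (comp_mem_repSpan σ h (hA1 _)) (by
                intro i
                rw [hA2, LinearMap.comp_apply, hA2]
                by_cases hij : i = j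
                · subst hij; simp
                · simp [Pi.single_apply, Ne.symm, hij])
            simpa using this
          exact hEnd
            { toFun := fun x => A (Pi.single j x) (w 0)
              map_add' := hadd
              map_smul' := hsmul } hcomm
        choose c hc using hf
        -- every a in the span satisfies the linear relation
        have key : ∀ a ∈ repSpan σ, a (w 0) = ∑ j : Fin k, c j • a (w j.succ) := by
          intro a ha
          have h1 : a (w 0) = (∑ j : Fin k, A (Pi.single j (a (w j.succ)))) (w 0) := by
            apply uniq a ha _ (Submodule.sum_mem _ fun j _ => hA1 _)
            intro i
            symm
            rw [LinearMap.sum_apply]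
            have hsum : (∑ j : Fin k, (A (Pi.single j (a (w j.succ)))) (w i.succ))
                = ∑ j : Fin k, Pi.single j (a (w j.succ)) i :=
              Finset.sum_congr rfl fun j _ => hA2 _ i
            classical
            rw [hsum, Fintype.sum_pi_single]
          rw [h1, LinearMap.sum_apply]
          exact Finset.sum_congr rfl fun j _ => hc j _
        have hid := key LinearMap.id (id_mem_repSpan σ)
        simp only [LinearMap.id_apply] at hid
        rw [linearIndependent_fin_succ] at hw
        exact hw.2 (hid ▸ Submodule.sum_mem _ fun j _ =>
          Submodule.smul_mem _ _ (Submodule.subset_span ⟨j, rfl⟩))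
      · -- B' is invariant, nonzero, hence ⊤
        have hinv : ∀ h : H, ∀ x ∈ B', σ h x ∈ B' := by
          rintro h x ⟨a, ha, hak, rfl⟩
          exact ⟨(σ h : W →ₗ[F] W) ∘ₗ a, comp_mem_repSpan σ h ha,
            fun i => by simp [LinearMap.comp_apply, hak i], rfl⟩
        rcases hirr B' hinv with h1 | h1
        · exact absurd h1 hB
        · have : tgt ∈ B' := h1 ▸ Submodule.mem_top
          obtain ⟨a, ha, hak, hav⟩ := this
          exact ⟨a, ha, hav, hak⟩
    intro w hw v
    have pieces : ∀ j : Fin (k + 1), ∃ a ∈ repSpan σ,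
        a (w j) = v j ∧ ∀ l : Fin (k + 1), l ≠ j → a (w l) = 0 := by
      intro j
      set e := Equiv.swap (0 : Fin (k + 1)) j with he
      obtain ⟨a, ha, ha0, hak⟩ := step (w ∘ e) (hw.comp e e.injective) (v j)
      refine ⟨a, ha, ?_, ?_⟩
      · simpa [he, Equiv.swap_apply_left] using ha0
      · intro l hl
        have hel : e l ≠ 0 := by
          intro h0
          apply hl
          have := congrArg e h0
          rwa [Equiv.swap_apply_self, Equiv.swap_apply_left] at this
        obtain ⟨m, hm⟩ : ∃ m : Fin k, e l = m.succ := by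
          refine ⟨(e l).pred hel, ?_⟩
          simp
        have : a (w (e (e l))) = 0 := by
          rw [hm]; exact hak m
        rwa [Equiv.swap_apply_self] at this
    choose a ha hav hao using pieces
    refine ⟨∑ j : Fin (k + 1), a j, Submodule.sum_mem _ fun j _ => ha j, ?_⟩
    intro i
    rw [LinearMap.sum_apply]
    rw [Finset.sum_eq_single i (fun j _ hji => hao j i (Ne.symm hji)) (by simp)]
    exact hav i
end CliffordDensity


theorem bijective_of_comp_smul_id {F : Type*} [Field F] {W : Type*} [AddCommGroup W] [Module F W]
    (f h : W →ₗ[F] W) (c c' : F) (hc : c ≠ 0) (hc' : c' ≠ 0)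
    (h1 : f ∘ₗ h = c • LinearMap.id) (h2 : h ∘ₗ f = c' • LinearMap.id) :
    Function.Bijective f := by
  constructor
  · intro x y hxy
    have h2x := congrArg (fun φ : W →ₗ[F] W => φ x) h2
    have h2y := congrArg (fun φ : W →ₗ[F] W => φ y) h2
    simp only [LinearMap.comp_apply, LinearMap.smul_apply, LinearMap.id_apply] at h2x h2y
    have : c' • x = c' • y := by rw [← h2x, ← h2y, hxy]
    exact smul_right_injective W hc' this
  · intro v
    refine ⟨c⁻¹ • h v, ?_⟩
    have h1v := congrArg (fun φ : W →ₗ[F] W => φ v) h1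
    simp only [LinearMap.comp_apply, LinearMap.smul_apply, LinearMap.id_apply] at h1v
    rw [map_smul, h1v, smul_smul, inv_mul_cancel₀ hc, one_smul]

/-- Construction of an irreducible projective representation of `G`, trivial on `N`,
with factor set `α⁻¹`, given that `α` is a normalized cocycle constant on `N`-cosets. -/
theorem exists_proj_irred_inv_factor (F : Type u) [Field F] {G : Type u} [Group G]
    (N : Subgroup G) (hN : N.Normal) (α : G → G → Fˣ)
    (hα1 : ∀ g, α 1 g = 1) (hαg1 : ∀ g, α g 1 = 1)
    (hαco : ∀ g₁ g₂ g₃ : G, α g₁ g₂ * α (g₁ * g₂) g₃ = α g₂ g₃ * α g₁ (g₂ * g₃))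
    (hα : ∀ (g₁ g₂ : G) (x₁ x₂ : ↥N), α (g₁ * (x₁ : G)) (g₂ * (x₂ : G)) = α g₁ g₂) :
    ∃ (U : Type u) (_ : AddCommGroup U) (_ : Module F U) (Y : G → (U →ₗ[F] U)),
      ((∀ g : G, Function.Bijective (Y g)) ∧
        ∀ g₁ g₂ : G, (Y g₁) ∘ₗ (Y g₂) = (((α g₁ g₂)⁻¹ : Fˣ) : F) • Y (g₁ * g₂)) ∧
      (Nontrivial U ∧ ∀ p : Submodule F U, (∀ g : G, ∀ w ∈ p, Y g w ∈ p) → p = ⊥ ∨ p = ⊤) ∧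
      (∀ n : ↥N, Y (n : G) = LinearMap.id) := by
  haveI := hN
  -- α is constant on right N-cosets in each variable
  have hαc : ∀ (g₁ g₂ : G) (x : ↥N), α g₁ (g₂ * (x : G)) = α g₁ g₂ := by
    intro g₁ g₂ x
    have := hα g₁ g₂ 1 x
    simpa using this
  set Q := G ⧸ N with hQ
  set V := Q →₀ F with hV
  -- the twisted coefficient, well-defined via `Quotient.out`
  set b : G → Q → F := fun g q => (((α g q.out)⁻¹ : Fˣ) : F) with hb
  have hbmk : ∀ (g h : G), b g (QuotientGroup.mk h) = (((α g h)⁻¹ : Fˣ) : F) := by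
    intro g h
    obtain ⟨n, hn⟩ := QuotientGroup.mk_out_eq_mul N h
    simp only [hb]
    rw [hn, hαc]
  set T : G → (V →ₗ[F] V) := fun g =>
    Finsupp.lsum F (fun q => b g q • Finsupp.lsingle ((QuotientGroup.mk g : Q) * q)) with hT
  have hTs : ∀ (g h : G) (c : F), T g (Finsupp.single (QuotientGroup.mk h) c)
      = Finsupp.single (QuotientGroup.mk (g * h)) ((((α g h)⁻¹ : Fˣ) : F) * c) := by
    intro g h c
    rw [hT]
    rw [Finsupp.lsum_single]
    rw [LinearMap.smul_apply, Finsupp.lsingle_apply, Finsupp.smul_single, hbmk, smul_eq_mul]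
    rfl
  -- the cocycle identity for the inverse factor set
  have hbco : ∀ g₁ g₂ g₃ : G, (((α g₁ (g₂ * g₃))⁻¹ : Fˣ) : F) * (((α g₂ g₃)⁻¹ : Fˣ) : F)
      = (((α g₁ g₂)⁻¹ : Fˣ) : F) * (((α (g₁ * g₂) g₃)⁻¹ : Fˣ) : F) := by
    intro g₁ g₂ g₃
    have h2 : (α g₁ g₂ * α (g₁ * g₂) g₃)⁻¹ = (α g₂ g₃ * α g₁ (g₂ * g₃))⁻¹ := by
      rw [hαco]
    rw [mul_inv, mul_inv] at h2
    have h3 := congrArg (Units.val) h2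
    simp only [Units.val_mul] at h3
    rw [mul_comm]
    exact h3.symm
  have hcomp : ∀ g₁ g₂ : G, (T g₁) ∘ₗ (T g₂) = (((α g₁ g₂)⁻¹ : Fˣ) : F) • T (g₁ * g₂) := by
    intro g₁ g₂
    apply Finsupp.lhom_ext
    intro q c
    obtain ⟨h, rfl⟩ := QuotientGroup.mk_surjective q
    rw [LinearMap.comp_apply, hTs, hTs, LinearMap.smul_apply, hTs, Finsupp.smul_single,
      mul_assoc g₁ g₂ h, smul_eq_mul]
    congr 1
    rw [← mul_assoc, ← mul_assoc, hbco g₁ g₂ h]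
  have hTn : ∀ n : ↥N, T (n : G) = LinearMap.id := by
    intro n
    apply Finsupp.lhom_ext
    intro q c
    obtain ⟨h, rfl⟩ := QuotientGroup.mk_surjective q
    rw [hTs, LinearMap.id_apply]
    have hαn : α (n : G) h = 1 := by
      have hh := hα 1 h n 1
      simp only [one_mul, OneMemClass.coe_one, mul_one] at hh
      rw [hα1] at hh
      exact hh
    have hmk : (QuotientGroup.mk ((n : G) * h) : Q) = QuotientGroup.mk h := by
      rw [QuotientGroup.eq]
      have : ((n : G) * h)⁻¹ * h = h⁻¹ * (n : G)⁻¹ * h := by group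
      rw [this]
      simpa using hN.conj_mem _ (N.inv_mem n.2) h⁻¹
    rw [hαn, hmk]
    simp
  have hT1 : T 1 = LinearMap.id := by
    have := hTn 1
    simpa using this
  have hTbij : ∀ g : G, Function.Bijective (T g) := by
    intro g
    refine bijective_of_comp_smul_id (T g) (T g⁻¹) (((α g g⁻¹)⁻¹ : Fˣ) : F)
      (((α g⁻¹ g)⁻¹ : Fˣ) : F) (Units.ne_zero _) (Units.ne_zero _) ?_ ?_
    · rw [hcomp, mul_inv_cancel, hT1]
    · rw [hcomp, inv_mul_cancel, hT1]
  -- Zorn's lemma: a maximal invariant submodule avoiding δ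
  set δ : V := Finsupp.single (1 : Q) (1 : F) with hδ
  have hδ0 : δ ≠ 0 := by
    rw [hδ, Ne, Finsupp.single_eq_zero]
    exact one_ne_zero
  set S : Set (Submodule F V) := {p | (∀ (g : G), ∀ v ∈ p, T g v ∈ p) ∧ δ ∉ p} with hS
  have hbot : (⊥ : Submodule F V) ∈ S := by
    constructor
    · intro g v hv
      rw [Submodule.mem_bot] at hv ⊢
      rw [hv, map_zero]
    · rw [Submodule.mem_bot]
      exact hδ0
  obtain ⟨M, -, hM⟩ := zorn_le_nonempty₀ S (fun c hcS hchain y hy => by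
    refine ⟨sSup c, ⟨?_, ?_⟩, fun z hz => le_sSup hz⟩
    · intro g v hv
      obtain ⟨p, hp, hvp⟩ := (Submodule.mem_sSup_of_directed ⟨y, hy⟩ hchain.directedOn).1 hv
      exact (Submodule.mem_sSup_of_directed ⟨y, hy⟩ hchain.directedOn).2
        ⟨p, hp, (hcS hp).1 g v hvp⟩
    · intro hmem
      obtain ⟨p, hp, hvp⟩ := (Submodule.mem_sSup_of_directed ⟨y, hy⟩ hchain.directedOn).1 hmem
      exact (hcS hp).2 hvp) ⊥ hbot
  have hMT : ∀ g : G, M ≤ M.comap (T g) := fun g v hv => hM.1.1 g v hv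
  set Y : G → ((V ⧸ M) →ₗ[F] (V ⧸ M)) := fun g => M.mapQ M (T g) (hMT g) with hY
  have hYmk : ∀ (g : G) (v : V), Y g (M.mkQ v) = M.mkQ (T g v) := by
    intro g v
    rw [hY, Submodule.mkQ_apply, Submodule.mapQ_apply, Submodule.mkQ_apply]
  have hYcomp : ∀ g₁ g₂ : G, (Y g₁) ∘ₗ (Y g₂) = (((α g₁ g₂)⁻¹ : Fˣ) : F) • Y (g₁ * g₂) := by
    intro g₁ g₂
    apply Submodule.linearMap_qext
    refine LinearMap.ext fun v => ?_
    simp only [LinearMap.comp_apply, LinearMap.smul_apply, Submodule.mkQ_apply]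
    rw [← Submodule.mkQ_apply, hYmk, hYmk, hYmk, ← map_smul]
    congr 1
    have := congrArg (fun φ : V →ₗ[F] V => φ v) (hcomp g₁ g₂)
    simpa using this
  have hYN : ∀ n : ↥N, Y (n : G) = LinearMap.id := by
    intro n
    apply Submodule.linearMap_qext
    refine LinearMap.ext fun v => ?_
    simp only [LinearMap.comp_apply, LinearMap.id_apply, Submodule.mkQ_apply]
    rw [← Submodule.mkQ_apply, hYmk, hTn]
    rfl
  have hY1 : Y 1 = LinearMap.id := by
    have := hYN 1
    simpa using this
  have hYbij : ∀ g : G, Function.Bijective (Y g) := by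
    intro g
    refine bijective_of_comp_smul_id (Y g) (Y g⁻¹) (((α g g⁻¹)⁻¹ : Fˣ) : F)
      (((α g⁻¹ g)⁻¹ : Fˣ) : F) (Units.ne_zero _) (Units.ne_zero _) ?_ ?_
    · rw [hYcomp, mul_inv_cancel, hY1]
    · rw [hYcomp, inv_mul_cancel, hY1]
  have hUnt : Nontrivial (V ⧸ M) := by
    refine nontrivial_of_ne (M.mkQ δ) 0 ?_
    rw [Ne, Submodule.mkQ_apply, Submodule.Quotient.mk_eq_zero]
    exact hM.1.2
  have hirr : ∀ p : Submodule F (V ⧸ M), (∀ g : G, ∀ u ∈ p, Y g u ∈ p) → p = ⊥ ∨ p = ⊤ := by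
    intro p hp
    set q := p.comap M.mkQ with hq
    have hMq : M ≤ q := by
      intro v hv
      show M.mkQ v ∈ p
      rw [Submodule.mkQ_apply, (Submodule.Quotient.mk_eq_zero M).2 hv]
      exact p.zero_mem
    have hqinv : ∀ g : G, ∀ v ∈ q, T g v ∈ q := by
      intro g v hv
      show M.mkQ (T g v) ∈ p
      rw [← hYmk]
      exact hp g _ hv
    by_cases hδq : δ ∈ q
    · right
      have hqtop : q = ⊤ := by
        rw [eq_top_iff]
        rintro v -
        induction v using Finsupp.induction_linear with
        | zero => exact q.zero_mem
        | add f g hf hg => exact q.add_mem hf hg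
        | single aq r =>
          obtain ⟨h, rfl⟩ := QuotientGroup.mk_surjective aq
          have hδr : r • δ = Finsupp.single (QuotientGroup.mk (1 : G) : Q) r := by
            rw [hδ, Finsupp.smul_single, smul_eq_mul, mul_one]
            rfl
          have hth : T h (r • δ) = Finsupp.single (QuotientGroup.mk h : Q) r := by
            rw [hδr, hTs, hαg1]
            simp
          rw [← hth]
          exact hqinv h _ (q.smul_mem r hδq)
      rw [eq_top_iff]
      intro u _
      obtain ⟨v, rfl⟩ := Submodule.mkQ_surjective M u
      have hvq : v ∈ q := by rw [hqtop]; exact Submodule.mem_top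
      exact hvq
    · left
      have hqS : q ∈ S := ⟨hqinv, hδq⟩
      have hle : q ≤ M := hM.2 hqS hMq
      rw [eq_bot_iff]
      intro u hu
      obtain ⟨v, rfl⟩ := Submodule.mkQ_surjective M u
      rw [Submodule.mem_bot, Submodule.mkQ_apply, Submodule.Quotient.mk_eq_zero]
      exact hle hu
  exact ⟨V ⧸ M, inferInstance, inferInstance, Y, ⟨hYbij, hYcomp⟩, ⟨hUnt, hirr⟩, hYN⟩



theorem repIso_dsum_of_tensor {F : Type*} [Field F] {H : Type*} [Monoid H]
    {U W : Type*} [AddCommGroup W] [Module F W] [AddCommGroup U] [Module F U]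
    (σ : Representation F H W) {ι : Type*} (b : Module.Basis ι F U)
    (ρ : Representation F H (U ⊗[F] W))
    (hρ : ∀ (n : H) (u : U) (w : W), ρ n (u ⊗ₜ[F] w) = u ⊗ₜ[F] (σ n w)) :
    ∃ e : (U ⊗[F] W) ≃ₗ[F] (⨁ _ : ι, W),
      ∀ (n : H) (v : U ⊗[F] W), e (ρ n v) = (dsumRep F fun _ : ι => σ) n (e v) := by
  classical
  set e : (U ⊗[F] W) ≃ₗ[F] (⨁ _ : ι, W) :=
    (TensorProduct.congr b.repr (LinearEquiv.refl F W)).trans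
      ((TensorProduct.finsuppScalarLeft F W ι).trans (finsuppLequivDFinsupp F)) with he
  refine ⟨e, ?_⟩
  intro n t
  induction t using TensorProduct.induction_on with
  | zero => simp
  | add x y hx hy =>
    simp only [map_add, hx, hy]
  | tmul u w =>
    rw [hρ]
    refine DFinsupp.ext fun i => ?_
    have h2 : ∀ v : W, e (u ⊗ₜ[F] v) i = (b.repr u i) • v := by
      intro v
      have h3 : e (u ⊗ₜ[F] v)
          = Finsupp.toDFinsupp ((TensorProduct.finsuppScalarLeft F W ι) (b.repr u ⊗ₜ[F] v)) := by
        rw [he]; rfl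
      rw [h3, Finsupp.toDFinsupp_coe, TensorProduct.finsuppScalarLeft_apply_tmul_apply]
    show e (u ⊗ₜ[F] (σ n w)) i
        = (DFinsupp.mapRange.linearMap fun _ : ι => (σ n : W →ₗ[F] W)) (e (u ⊗ₜ[F] w)) i
    rw [DFinsupp.mapRange.linearMap_apply, DFinsupp.mapRange_apply, h2, h2, map_smul]

/-- Theorem 3.9 (Clifford): let `N ⊴ G`, let `R : N → GL(W)` be an irreducible
`G`-invariant representation with `End_{FN}(W) = F`, and let `X : G → GL(W)` be a
projective representation extending `R` whose factor set `α` is constant on cosets of `N`.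
Then (a) there exists an irreducible projective representation `Y : G → GL(U)` trivial on
`N` with factor set `α⁻¹`; moreover, for any such `Y`, the map `S(g) = Y(g) ⊗ X(g)` is an
irreducible ordinary representation of `G` on `U ⊗_F W` whose restriction to `N` is a
direct sum of `dim_F U` copies of `W`. -/
theorem clifford_tensor_with_projective
    (F : Type u) [Field F] {G : Type u} [Group G] (N : Subgroup G) (hN : N.Normal)
    (W : Type u) [AddCommGroup W] [Module F W] (σ : Representation F ↥N W)
    (hσ : IsIrreducibleRep F σ)
    (hGinv : ∀ g : G, RepIso F (σ.comp (conjHom hN g)) σ)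
    (hEnd : ∀ f : W →ₗ[F] W,
      (∀ (n : ↥N) (w : W), f (σ n w) = σ n (f w)) → ∃ c : F, ∀ w : W, f w = c • w)
    (X : G → (W →ₗ[F] W)) (α : G → G → Fˣ)
    (hX : IsProjRep F X α)
    (hXR : ∀ n : ↥N, X (n : G) = σ n)
    (hα : ∀ (g₁ g₂ : G) (x₁ x₂ : ↥N), α (g₁ * (x₁ : G)) (g₂ * (x₂ : G)) = α g₁ g₂) :
    -- (a): existence of Y
    (∃ (U : Type u) (_ : AddCommGroup U) (_ : Module F U) (Y : G → (U →ₗ[F] U)),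
      IsProjRep F Y (fun g₁ g₂ => (α g₁ g₂)⁻¹) ∧ IsProjIrred F Y ∧
        ∀ n : ↥N, Y (n : G) = LinearMap.id) ∧
    -- moreover, for any such Y, `S(g) = Y(g) ⊗ X(g)` is an irreducible representation
    -- whose restriction to N is the direct sum of dim_F U copies of W:
    ∀ (U : Type u) [AddCommGroup U] [Module F U] (Y : G → (U →ₗ[F] U)),
      IsProjRep F Y (fun g₁ g₂ => (α g₁ g₂)⁻¹) → IsProjIrred F Y →
        (∀ n : ↥N, Y (n : G) = LinearMap.id) →
        ∃ ρS : Representation F G (U ⊗[F] W),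
          (∀ g : G, ρS g = TensorProduct.map (Y g) (X g)) ∧
          IsIrreducibleRep F ρS ∧
          ∃ (ι : Type u) (b : Module.Basis ι F U),
            RepIso F (ρS.comp N.subtype) (dsumRep F fun _ : ι => σ) := by
  haveI := hN
  obtain ⟨hXbij, hXmul⟩ := hX
  haveI hWnt : Nontrivial W := hσ.1
  obtain ⟨w₀, hw₀⟩ := exists_ne (0 : W)
  have hX1 : X 1 = LinearMap.id := by
    have h := hXR 1
    rw [OneMemClass.coe_one, map_one] at h
    rw [h]; rfl
  have scal2 : ∀ (c c' : F) (g : G), c • X g = c' • X g → c = c' := by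
    intro c c' g h
    have hXw : X g w₀ ≠ 0 := fun h0 => hw₀ ((hXbij g).1 (by rw [h0, map_zero]))
    have hv := congrArg (fun φ : W →ₗ[F] W => φ w₀) h
    simp only [LinearMap.smul_apply] at hv
    exact smul_left_injective F hXw hv
  have hα1 : ∀ g : G, α 1 g = 1 := by
    intro g
    have h := hXmul 1 g
    rw [hX1, LinearMap.id_comp, one_mul] at h
    refine Units.ext ?_
    rw [Units.val_one]
    exact scal2 _ 1 g (by rw [one_smul]; exact h.symm)
  have hαg1 : ∀ g : G, α g 1 = 1 := by
    intro g
    have h := hXmul g 1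
    rw [hX1, LinearMap.comp_id, mul_one] at h
    refine Units.ext ?_
    rw [Units.val_one]
    exact scal2 _ 1 g (by rw [one_smul]; exact h.symm)
  have hαco : ∀ g₁ g₂ g₃ : G, α g₁ g₂ * α (g₁ * g₂) g₃ = α g₂ g₃ * α g₁ (g₂ * g₃) := by
    intro g₁ g₂ g₃
    have e1 : (X g₁ ∘ₗ X g₂) ∘ₗ X g₃
        = (((α g₁ g₂ : Fˣ) : F) * ((α (g₁ * g₂) g₃ : Fˣ) : F)) • X (g₁ * g₂ * g₃) := by
      rw [hXmul, LinearMap.smul_comp, hXmul, smul_smul]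
    have e2 : X g₁ ∘ₗ (X g₂ ∘ₗ X g₃)
        = (((α g₂ g₃ : Fˣ) : F) * ((α g₁ (g₂ * g₃) : Fˣ) : F)) • X (g₁ * (g₂ * g₃)) := by
      rw [hXmul, LinearMap.comp_smul, hXmul, smul_smul]
    rw [LinearMap.comp_assoc] at e1
    rw [← mul_assoc g₁ g₂ g₃] at e2
    have e3 := e1.symm.trans e2
    have := scal2 _ _ _ e3
    refine Units.ext ?_
    rw [Units.val_mul, Units.val_mul]
    exact this
  constructor
  · -- part (a): existence of Y
    obtain ⟨U, iAG, iM, Y, hYp, hYi, hYn⟩ :=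
      exists_proj_irred_inv_factor F N hN α hα1 hαg1 hαco hα
    exact ⟨U, iAG, iM, Y, hYp, hYi, hYn⟩
  · -- part (b)
    intro U _ _ Y hYproj hYirr hYN
    classical
    obtain ⟨hYbij, hYmul⟩ := hYproj
    obtain ⟨hUnt, hYi⟩ := hYirr
    have hY1 : Y 1 = LinearMap.id := by
      have h := hYN 1
      rwa [OneMemClass.coe_one] at h
    -- the representation S(g) = Y(g) ⊗ X(g)
    set ρS : Representation F G (U ⊗[F] W) :=
      { toFun := fun g => TensorProduct.map (Y g) (X g)
        map_one' := by
          show TensorProduct.map (Y 1) (X 1) = 1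
          rw [hY1, hX1, TensorProduct.map_id]; rfl
        map_mul' := by
          intro g₁ g₂
          show TensorProduct.map (Y (g₁ * g₂)) (X (g₁ * g₂))
            = TensorProduct.map (Y g₁) (X g₁) * TensorProduct.map (Y g₂) (X g₂)
          rw [Module.End.mul_eq_comp, ← TensorProduct.map_comp, hYmul, hXmul,
            TensorProduct.map_smul_left, TensorProduct.map_smul_right, smul_smul]
          have hc : (((α g₁ g₂)⁻¹ : Fˣ) : F) * ((α g₁ g₂ : Fˣ) : F) = 1 := by
            rw [← Units.val_mul, inv_mul_cancel, Units.val_one]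
          rw [hc, one_smul] } with hρS
    have hρSapp : ∀ g : G, ρS g = TensorProduct.map (Y g) (X g) := fun g => rfl
    -- a basis of W and the associated decomposition of U ⊗ W
    set cb := Module.Basis.ofVectorSpace F W with hcb
    haveI : Nonempty (Module.Basis.ofVectorSpaceIndex F W) := cb.index_nonempty
    set E : (U ⊗[F] W) ≃ₗ[F] ((Module.Basis.ofVectorSpaceIndex F W) →₀ U) :=
      (TensorProduct.congr (LinearEquiv.refl F U) cb.repr).trans
        (TensorProduct.finsuppScalarRight F F U _) with hE
    have hEtmul : ∀ (u : U) (w : W) (i), E (u ⊗ₜ[F] w) i = (cb.repr w i) • u := by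
      intro u w i
      rw [hE, LinearEquiv.trans_apply, TensorProduct.congr_tmul, LinearEquiv.refl_apply,
        TensorProduct.finsuppScalarRight_apply_tmul_apply]
    have hEsymm : ∀ (i) (u : U), E.symm (Finsupp.single i u) = u ⊗ₜ[F] (cb i) := by
      intro i u
      rw [hE, LinearEquiv.trans_symm, LinearEquiv.trans_apply,
        TensorProduct.finsuppScalarRight_symm_apply_single, TensorProduct.congr_symm_tmul,
        LinearEquiv.refl_symm, LinearEquiv.refl_apply, Module.Basis.repr_symm_single_one]
    haveI hUWnt : Nontrivial (U ⊗[F] W) := by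
      obtain ⟨u₀, hu₀⟩ := exists_ne (0 : U)
      obtain ⟨i⟩ := (inferInstance : Nonempty (Module.Basis.ofVectorSpaceIndex F W))
      refine nontrivial_of_ne (E.symm (Finsupp.single i u₀)) 0 ?_
      intro h0
      have : Finsupp.single i u₀ = (0 : _ →₀ U) := by
        have := congrArg E h0
        rwa [LinearEquiv.apply_symm_apply, map_zero] at this
      exact hu₀ (by simpa using congrArg (fun f => f i) this)
    refine ⟨ρS, hρSapp, ⟨hUWnt, ?_⟩, ?_⟩
    · -- irreducibility of ρS
      intro p hpinv
      by_cases hpbot : p = ⊥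
      · exact Or.inl hpbot
      right
      obtain ⟨t, htp, ht0⟩ := (Submodule.ne_bot_iff p).1 hpbot
      -- p is invariant under id ⊗ a for a in the span of the σ n
      have hpspan : ∀ a ∈ repSpan σ, ∀ z ∈ p, (LinearMap.lTensor U a) z ∈ p := by
        intro a ha
        induction ha using Submodule.span_induction with
        | mem x hx =>
          obtain ⟨n, rfl⟩ := hx
          intro z hz
          have h1 : LinearMap.lTensor U ((σ n : W →ₗ[F] W))
              = TensorProduct.map (Y ((n : G))) (X ((n : G))) := by
            rw [hYN n, hXR n]; rfl
          rw [h1]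
          exact hpinv ((n : G)) z hz
        | zero => intro z hz; rw [LinearMap.lTensor_zero]; simpa using p.zero_mem
        | add x y _ _ hx hy =>
          intro z hz
          rw [LinearMap.lTensor_add]
          exact p.add_mem (hx z hz) (hy z hz)
        | smul c x _ hx =>
          intro z hz
          rw [LinearMap.lTensor_smul]
          exact p.smul_mem c (hx z hz)
      -- decompose t along the basis of W
      set f := E t with hf
      have hf0 : f ≠ 0 := by
        intro h0
        apply ht0
        have := congrArg E.symm h0
        rwa [hf, LinearEquiv.symm_apply_apply, map_zero] at this
      obtain ⟨i₀, hi₀⟩ := Finsupp.support_nonempty_iff.2 hf0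
      have hfi₀ : f i₀ ≠ 0 := Finsupp.mem_support_iff.1 hi₀
      -- every pure tensor f i₀ ⊗ tgt lies in p
      have hkey : ∀ tgt : W, (f i₀) ⊗ₜ[F] tgt ∈ p := by
        intro tgt
        classical
        set s := f.support with hs
        set eqv := s.equivFin with heqv
        set wfam : Fin s.card → W := fun m => cb ((eqv.symm m : s) : Module.Basis.ofVectorSpaceIndex F W)
          with hwfam
        have hli : LinearIndependent F wfam := by
          refine cb.linearIndependent.comp _ ?_
          exact Subtype.val_injective.comp eqv.symm.injective
        set vfam : Fin s.card → W :=
          fun m => if ((eqv.symm m : s) : Module.Basis.ofVectorSpaceIndex F W) = i₀ then tgt else 0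
          with hvfam
        obtain ⟨a, ha, hav⟩ := rep_density σ hσ.2 hEnd s.card wfam hli vfam
        have hacb : ∀ i (hi : i ∈ s), a (cb i) = if i = i₀ then tgt else 0 := by
          intro i hi
          have h2 := hav (eqv ⟨i, hi⟩)
          rw [hwfam, hvfam] at h2
          simpa using h2
        have hts : t = ∑ i ∈ s, (f i) ⊗ₜ[F] (cb i) := by
          have h1 : t = E.symm f := by rw [hf, LinearEquiv.symm_apply_apply]
          rw [h1]
          conv_lhs => rw [← Finsupp.sum_single f]
          rw [map_finsuppSum, Finsupp.sum]
          exact Finset.sum_congr rfl fun i _ => hEsymm i (f i)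
        have hat : (LinearMap.lTensor U a) t = (f i₀) ⊗ₜ[F] tgt := by
          rw [hts, map_sum]
          have hterm : ∀ i ∈ s, (LinearMap.lTensor U a) ((f i) ⊗ₜ[F] (cb i))
              = if i = i₀ then (f i₀) ⊗ₜ[F] tgt else 0 := by
            intro i hi
            rw [LinearMap.lTensor_tmul, hacb i hi]
            by_cases hii : i = i₀
            · subst hii; simp
            · simp [hii]
          rw [Finset.sum_congr rfl hterm, Finset.sum_ite_eq' s i₀ fun _ => (f i₀) ⊗ₜ[F] tgt,
            if_pos hi₀]
        rw [← hat]
        exact hpspan a ha t htp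
      -- the subspace of u with u ⊗ W ⊆ p is Y-invariant, nonzero, hence everything
      set U₀ : Submodule F U :=
        { carrier := {u : U | ∀ w : W, u ⊗ₜ[F] w ∈ p}
          zero_mem' := fun w => by rw [TensorProduct.zero_tmul]; exact p.zero_mem
          add_mem' := by
            intro u u' hu hu' w
            rw [TensorProduct.add_tmul]
            exact p.add_mem (hu w) (hu' w)
          smul_mem' := by
            intro c u hu w
            rw [← TensorProduct.smul_tmul']
            exact p.smul_mem c (hu w) } with hU₀
      have hU₀inv : ∀ g : G, ∀ u ∈ U₀, Y g u ∈ U₀ := by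
        intro g u hu w
        obtain ⟨w', rfl⟩ := (hXbij g).2 w
        have : (Y g u) ⊗ₜ[F] (X g w') = ρS g (u ⊗ₜ[F] w') := rfl
        rw [this]
        exact hpinv g _ (hu w')
      have hU₀top : U₀ = ⊤ := by
        refine (hYi U₀ hU₀inv).resolve_left ?_
        intro h0
        have hmem : f i₀ ∈ U₀ := fun w => hkey w
        rw [h0, Submodule.mem_bot] at hmem
        exact hfi₀ hmem
      rw [eq_top_iff, ← TensorProduct.span_tmul_eq_top F U W, Submodule.span_le]
      rintro _ ⟨u, w, rfl⟩
      have hu : u ∈ U₀ := by rw [hU₀top]; exact Submodule.mem_top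
      exact hu w
    · -- restriction to N is a direct sum of dim U copies of W
      refine ⟨Module.Free.ChooseBasisIndex F U, Module.Free.chooseBasis F U, ?_⟩
      exact repIso_dsum_of_tensor σ (Module.Free.chooseBasis F U) (ρS.comp N.subtype)
        (fun n u w => by
          show TensorProduct.map (Y ((n : G))) (X ((n : G))) (u ⊗ₜ[F] w) = _
          rw [TensorProduct.map_tmul, hYN, hXR]
          rfl)
end
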